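/- arXiv:2102.06751 — 6 statements merged into one kernel-verified Lean document; each statement's English description precedes it below -/
import Mathlib

section
/- Let β ≥ 0 and ν ≥ 0 be real, and let ϑ be a real number with ϑ > G_{β,ν+1}(0). Then the eigenvalue equation ϑλ + G_{β,ν}(λ) = 0 has no solution λ in the closed right half plane; that is, for every complex λ with Re(λ) ≥ 0 one has ϑλ + G_{β,ν}(λ) ≠ 0. (Hence the constant-flux steady state of the limit model is linearly stable whenever the removal parameter η satisfies η > (G_{β,ν+1}(0)/G_{β,ν}(0))^{β+1}.) -/
open MeasureTheory Set Real

/-- For `Re w ≤ 0`, `‖exp w - 1‖ ≤ ‖w‖`. -/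
lemma exp_sub_one_norm_le {w : ℂ} (hw : w.re ≤ 0) : ‖Complex.exp w - 1‖ ≤ ‖w‖ := by
  have hder : ∀ t ∈ Set.Icc (0:ℝ) 1,
      HasDerivWithinAt (fun t : ℝ => Complex.exp ((t : ℂ) * w))
        (Complex.exp ((t : ℂ) * w) * w) (Set.Icc 0 1) t := by
    intro t ht
    have h1 : HasDerivAt (fun t : ℝ => (t : ℂ) * w) w t := by
      simpa using (Complex.ofRealCLM.hasDerivAt (x := t)).mul_const w
    exact h1.cexp.hasDerivWithinAt
  have hbound : ∀ t ∈ Set.Ico (0:ℝ) 1, ‖Complex.exp ((t : ℂ) * w) * w‖ ≤ ‖w‖ := by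
    intro t ht
    rw [norm_mul, Complex.norm_exp]
    have : ((t : ℂ) * w).re = t * w.re := by simp
    rw [this]
    have h1 : Real.exp (t * w.re) ≤ 1 := by
      rw [Real.exp_le_one_iff]
      exact mul_nonpos_of_nonneg_of_nonpos ht.1 hw
    nlinarith [norm_nonneg w, Real.exp_pos (t * w.re)]
  have := norm_image_sub_le_of_norm_deriv_le_segment_01' hder hbound
  simpa using this

/-- The characteristic function `G_{β,ν}(λ) = ∫₀^∞ z^ν exp(−z^{β+1}/(β+1)) e^{−λz} dz`
of the linearized Becker–Döring bubblelator limit model. -/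
noncomputable def G (β ν : ℝ) (l : ℂ) : ℂ :=
  ∫ z in Set.Ioi (0 : ℝ),
    ((z ^ ν * Real.exp (-z ^ (β + 1) / (β + 1)) : ℝ) : ℂ) * Complex.exp (-l * (z : ℂ))

lemma wInt (β p : ℝ) (hβ : 0 ≤ β) (hp : 0 ≤ p) :
    IntegrableOn (fun z : ℝ => z ^ p * Real.exp (-z ^ (β + 1) / (β + 1))) (Set.Ioi 0) := by
  have h := integrableOn_rpow_mul_exp_neg_mul_rpow (p := β + 1) (s := p) (b := (β + 1)⁻¹)
    (by linarith) (by linarith) (by positivity)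
  refine h.congr_fun (fun x _ => ?_) measurableSet_Ioi
  rw [neg_div, div_eq_inv_mul]; simp only [neg_mul]

lemma wMeas (β ν : ℝ) (l : ℂ) :
    Measurable (fun z : ℝ =>
      ((z ^ ν * Real.exp (-z ^ (β + 1) / (β + 1)) : ℝ) : ℂ) * Complex.exp (-l * (z : ℂ))) := by
  fun_prop

lemma GInt (β ν : ℝ) (hβ : 0 ≤ β) (hν : 0 ≤ ν) {l : ℂ} (hl : 0 ≤ l.re) :
    IntegrableOn (fun z : ℝ =>
      ((z ^ ν * Real.exp (-z ^ (β + 1) / (β + 1)) : ℝ) : ℂ) * Complex.exp (-l * (z : ℂ)))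
      (Set.Ioi 0) := by
  refine Integrable.mono (wInt β ν hβ hν) ((wMeas β ν l).aestronglyMeasurable) ?_
  rw [ae_restrict_iff' measurableSet_Ioi]
  filter_upwards with z hz
  rcases Set.mem_Ioi.mp hz with hz0
  have h1 : (0:ℝ) ≤ z ^ ν := Real.rpow_nonneg hz0.le ν
  have h2 : ‖Complex.exp (-l * (z : ℂ))‖ ≤ 1 := by
    rw [Complex.norm_exp, Real.exp_le_one_iff]
    have : (-l * (z : ℂ)).re = -(l.re * z) := by simp
    rw [this]
    simp only [neg_nonpos]
    positivity
  rw [norm_mul, Complex.norm_real, Real.norm_eq_abs]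
  nlinarith [abs_nonneg (z ^ ν * Real.exp (-z ^ (β + 1) / (β + 1))),
    norm_nonneg (Complex.exp (-l * (z:ℂ)))]

lemma G_zero (β ν : ℝ) :
    G β ν 0 = ((∫ z in Set.Ioi (0:ℝ), z ^ ν * Real.exp (-z ^ (β + 1) / (β + 1))) : ℝ) := by
  rw [G]
  simp only [neg_zero, zero_mul, Complex.exp_zero, mul_one]
  exact integral_ofReal

lemma W_pos (β ν : ℝ) (hβ : 0 ≤ β) (hν : 0 ≤ ν) :
    0 < ∫ z in Set.Ioi (0:ℝ), z ^ ν * Real.exp (-z ^ (β + 1) / (β + 1)) := by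
  rw [setIntegral_pos_iff_support_of_nonneg_ae]
  · have hsub : Set.Ioi (0:ℝ) ⊆
        Function.support (fun z : ℝ => z ^ ν * Real.exp (-z ^ (β + 1) / (β + 1))) ∩
          Set.Ioi 0 := by
      intro z hz
      refine ⟨?_, hz⟩
      have hz0 : (0:ℝ) < z := hz
      have : 0 < z ^ ν * Real.exp (-z ^ (β + 1) / (β + 1)) := by positivity
      exact Function.mem_support.mpr (ne_of_gt this)
    calc (0:ENNReal) < volume (Set.Ioi (0:ℝ)) := by simp [Real.volume_Ioi]
      _ ≤ _ := measure_mono hsub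
  · filter_upwards [ae_restrict_mem measurableSet_Ioi] with z hz
    have hz0 : (0:ℝ) < z := hz
    positivity
  · exact wInt β ν hβ hν

/-- If `ϑ > G_{β,ν+1}(0)`, the eigenvalue equation `ϑλ + G_{β,ν}(λ) = 0` has no root
in the closed right half plane. -/
theorem stmt0 (β ν ϑ : ℝ) (hβ : 0 ≤ β) (hν : 0 ≤ ν)
    (hϑ : (G β (ν + 1) 0).re < ϑ) :
    ∀ l : ℂ, 0 ≤ l.re → (ϑ : ℂ) * l + G β ν l ≠ 0 := by
  set W0 : ℝ := ∫ z in Set.Ioi (0:ℝ), z ^ ν * Real.exp (-z ^ (β + 1) / (β + 1)) with hW0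
  set W1 : ℝ := ∫ z in Set.Ioi (0:ℝ), z ^ (ν + 1) * Real.exp (-z ^ (β + 1) / (β + 1)) with hW1
  have hW0pos : 0 < W0 := W_pos β ν hβ hν
  have hW1pos : 0 < W1 := W_pos β (ν + 1) hβ (by linarith)
  have hG0 : G β ν 0 = (W0 : ℂ) := G_zero β ν
  have hG1 : (G β (ν + 1) 0).re = W1 := by rw [G_zero β (ν + 1)]; simp; exact hW1.symm
  have hϑ1 : W1 < ϑ := by rwa [hG1] at hϑ
  have hϑpos : 0 < ϑ := lt_trans hW1pos hϑ1
  intro l hl heq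
  rcases eq_or_ne l 0 with rfl | hlne
  · rw [mul_zero, zero_add, hG0] at heq
    exact hW0pos.ne' (by exact_mod_cast heq)
  · -- key bound : ‖G β ν l - W0‖ ≤ ‖l‖ * W1
    have hbound : ‖G β ν l - (W0 : ℂ)‖ ≤ ‖l‖ * W1 := by
      have hInt0 : IntegrableOn (fun z : ℝ =>
          ((z ^ ν * Real.exp (-z ^ (β + 1) / (β + 1)) : ℝ) : ℂ)) (Set.Ioi 0) := by
        have := GInt β ν hβ hν (l := 0) (by simp)
        simpa using this
      have hIntl := GInt β ν hβ hν hl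
      have hsub : G β ν l - (W0 : ℂ) =
          ∫ z in Set.Ioi (0:ℝ),
            ((z ^ ν * Real.exp (-z ^ (β + 1) / (β + 1)) : ℝ) : ℂ) *
              (Complex.exp (-l * (z : ℂ)) - 1) := by
        have hc : ((W0 : ℝ) : ℂ) = ∫ z in Set.Ioi (0:ℝ),
            ((z ^ ν * Real.exp (-z ^ (β + 1) / (β + 1)) : ℝ) : ℂ) := by
          rw [hW0]; exact integral_ofReal.symm
        rw [G, hc, ← integral_sub hIntl hInt0]
        congr 1
        funext z
        ring
      rw [hsub]
      have hgint : Integrable (fun z : ℝ =>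
          z ^ (ν + 1) * Real.exp (-z ^ (β + 1) / (β + 1)) * ‖l‖)
          (volume.restrict (Set.Ioi 0)) :=
        (wInt β (ν + 1) hβ (by linarith)).mul_const _
      have hpt : ∀ᵐ z ∂(volume.restrict (Set.Ioi (0:ℝ))),
          ‖((z ^ ν * Real.exp (-z ^ (β + 1) / (β + 1)) : ℝ) : ℂ) *
              (Complex.exp (-l * (z : ℂ)) - 1)‖ ≤
            z ^ (ν + 1) * Real.exp (-z ^ (β + 1) / (β + 1)) * ‖l‖ := by
        rw [ae_restrict_iff' measurableSet_Ioi]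
        filter_upwards with z hz
        have hz0 : (0:ℝ) < z := hz
        have h1 : ‖Complex.exp (-l * (z : ℂ)) - 1‖ ≤ ‖l‖ * z := by
          have hre : (-l * (z : ℂ)).re ≤ 0 := by
            have : (-l * (z : ℂ)).re = -(l.re * z) := by simp
            rw [this]; simp only [neg_nonpos]; positivity
          have h2 := exp_sub_one_norm_le hre
          have h3 : ‖-l * (z : ℂ)‖ = ‖l‖ * z := by
            rw [norm_mul, norm_neg, Complex.norm_real, Real.norm_eq_abs,
              abs_of_nonneg hz0.le]
          rwa [h3] at h2
        rw [norm_mul, Complex.norm_real, Real.norm_eq_abs,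
          abs_of_nonneg (a := z ^ ν * Real.exp (-z ^ (β + 1) / (β + 1))) (by positivity)]
        have hrpow : z ^ (ν + 1) = z ^ ν * z := Real.rpow_add_one hz0.ne' ν
        rw [hrpow]
        have hwnn : (0:ℝ) ≤ z ^ ν * Real.exp (-z ^ (β + 1) / (β + 1)) := by positivity
        calc z ^ ν * Real.exp (-z ^ (β + 1) / (β + 1)) * ‖Complex.exp (-l * (z:ℂ)) - 1‖
            ≤ z ^ ν * Real.exp (-z ^ (β + 1) / (β + 1)) * (‖l‖ * z) :=
              mul_le_mul_of_nonneg_left h1 hwnn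
          _ = z ^ ν * z * Real.exp (-z ^ (β + 1) / (β + 1)) * ‖l‖ := by ring
      calc ‖∫ z in Set.Ioi (0:ℝ),
          ((z ^ ν * Real.exp (-z ^ (β + 1) / (β + 1)) : ℝ) : ℂ) *
            (Complex.exp (-l * (z : ℂ)) - 1)‖
          ≤ ∫ z in Set.Ioi (0:ℝ),
              z ^ (ν + 1) * Real.exp (-z ^ (β + 1) / (β + 1)) * ‖l‖ :=
            norm_integral_le_of_norm_le hgint hpt
        _ = ‖l‖ * W1 := by rw [integral_mul_const, hW1, mul_comm]
    -- from heq : G β ν l = -(ϑ l), so W0 - G l = W0 + ϑ l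
    have hGl : G β ν l = -((ϑ : ℂ) * l) := by linear_combination heq
    have hkey : ‖(ϑ : ℂ) * l + (W0 : ℂ)‖ ≤ ‖l‖ * W1 := by
      have : (ϑ : ℂ) * l + (W0 : ℂ) = -(G β ν l - (W0 : ℂ)) := by rw [hGl]; ring
      rw [this, norm_neg]
      exact hbound
    have hnl : 0 < ‖l‖ := norm_pos_iff.mpr hlne
    have hsq : ‖(ϑ : ℂ) * l + (W0 : ℂ)‖ ^ 2 = (ϑ * l.re + W0) ^ 2 + (ϑ * l.im) ^ 2 := by
      rw [Complex.sq_norm]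
      simp [Complex.normSq_apply]
      ring
    have hsq2 : ‖l‖ ^ 2 = l.re ^ 2 + l.im ^ 2 := by
      rw [Complex.sq_norm]
      simp [Complex.normSq_apply]
      ring
    have hge : ϑ * ‖l‖ ≤ ‖(ϑ : ℂ) * l + (W0 : ℂ)‖ := by
      have h1 : (ϑ * ‖l‖) ^ 2 ≤ ‖(ϑ : ℂ) * l + (W0 : ℂ)‖ ^ 2 := by
        rw [hsq]
        nlinarith [hl, hW0pos.le, hϑpos.le, sq_nonneg (ϑ * l.im), hsq2,
          mul_nonneg (mul_nonneg hϑpos.le hl) hW0pos.le, sq_nonneg ϑ, sq_nonneg W0]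
      nlinarith [norm_nonneg ((ϑ : ℂ) * l + (W0 : ℂ)), mul_pos hϑpos hnl]
    nlinarith [hkey, hge, hϑ1, hnl]
end

section
/- Let ν ≥ 0 and t > 0. There exists ϑ > 0 such that ϑ·(it) + G_{0,ν}(it) = 0 (i.e., λ = it is a purely imaginary eigenvalue for some positive value of the rescaled removal parameter) if and only if there exists a nonnegative integer k with 4k < ν such that arctan(t) = (π/2)·(1+4k)/(1+ν). In particular, no such eigenvalue exists when ν = 0. -/
section Aux

open MeasureTheory Set Complex Filter Metric Topology

lemma aux_integrable {ν : ℝ} (hν : 0 ≤ ν) {s : ℂ} (hs : 0 < s.re) :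
    IntegrableOn (fun z : ℝ => (z:ℂ) ^ (ν:ℂ) * Complex.exp (-s * z)) (Ioi 0) := by
  have hb : IntegrableOn (fun z : ℝ => z ^ ν * Real.exp (-s.re * z)) (Ioi 0) := by
    have h := integrableOn_rpow_mul_exp_neg_mul_rpow (p := 1) (s := ν) (b := s.re)
      (by linarith) one_pos hs
    exact h.congr_fun (fun x hx => by simp only [Real.rpow_one]) measurableSet_Ioi
  have hm : AEStronglyMeasurable (fun z : ℝ => (z:ℂ) ^ (ν:ℂ) * Complex.exp (-s * z))
      (volume.restrict (Ioi 0)) := by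
    apply Measurable.aestronglyMeasurable
    exact (Complex.measurable_ofReal.pow measurable_const).mul
      (Complex.measurable_exp.comp (measurable_const.mul Complex.measurable_ofReal))
  refine hb.mono' hm ?_
  filter_upwards [ae_restrict_mem measurableSet_Ioi] with z hz
  have hz : (0:ℝ) < z := hz
  rw [norm_mul, Complex.norm_cpow_eq_rpow_re_of_pos hz, Complex.norm_exp]
  simp only [Complex.ofReal_re, Complex.neg_re, Complex.mul_re, Complex.ofReal_im, mul_zero,
    sub_zero]
  exact le_of_eq (by ring_nf)

lemma value_real {ν : ℝ} (hν : 0 ≤ ν) {r : ℝ} (hr : 0 < r) :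
    ∫ z in Ioi (0:ℝ), (z:ℂ) ^ (ν:ℂ) * Complex.exp (-(r:ℂ) * z)
      = Complex.Gamma ((ν:ℂ)+1) * (r:ℂ) ^ (-((ν:ℂ)+1)) := by
  have h := Complex.integral_cpow_mul_exp_neg_mul_Ioi (a := (ν:ℂ)+1) (r := r)
    (by simp; linarith) hr
  have h2 : ∀ z ∈ Ioi (0:ℝ), (z:ℂ) ^ ((ν:ℂ)+1-1) * Complex.exp (-((r:ℂ) * z))
      = (z:ℂ) ^ (ν:ℂ) * Complex.exp (-(r:ℂ) * z) := by
    intro z hz; rw [add_sub_cancel_right, neg_mul]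
  rw [setIntegral_congr_fun measurableSet_Ioi h2] at h
  rw [h, one_div, Complex.inv_cpow _ _ (by rw [Complex.arg_ofReal_of_nonneg hr.le]; exact Real.pi_ne_zero.symm), ← Complex.cpow_neg, mul_comm]

lemma Fdiff {ν : ℝ} (hν : 0 ≤ ν) :
    DifferentiableOn ℂ
      (fun s : ℂ => ∫ z in Ioi (0:ℝ), (z:ℂ) ^ (ν:ℂ) * Complex.exp (-s * z))
      {s : ℂ | 0 < s.re} := by
  intro s₀ hs₀
  have hs₀' : 0 < s₀.re := hs₀
  apply DifferentiableAt.differentiableWithinAt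
  set ε := s₀.re / 2 with hεdef
  have hε0 : 0 < ε := by positivity
  have hball : ∀ s ∈ Metric.ball s₀ ε, ε ≤ s.re := by
    intro s hs
    rw [Metric.mem_ball, Complex.dist_eq] at hs
    have h1 : |(s - s₀).re| < ε := lt_of_le_of_lt (Complex.abs_re_le_norm _) hs
    rw [Complex.sub_re, abs_lt] at h1
    linarith [h1.1]
  have hmeas : ∀ s : ℂ, AEStronglyMeasurable (fun z : ℝ => (z:ℂ) ^ (ν:ℂ) * Complex.exp (-s * z))
      (volume.restrict (Ioi 0)) := fun s =>
    ((Complex.measurable_ofReal.pow measurable_const).mul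
      (Complex.measurable_exp.comp (measurable_const.mul Complex.measurable_ofReal))).aestronglyMeasurable
  have hbound : ∀ᵐ (z:ℝ) ∂(volume.restrict (Ioi 0)), ∀ s ∈ Metric.ball s₀ ε,
      ‖(z:ℂ) ^ (ν:ℂ) * (Complex.exp (-s * z) * (-1 * z))‖ ≤ z ^ (ν+1) * Real.exp (-ε * z) := by
    filter_upwards [ae_restrict_mem measurableSet_Ioi] with z hz s hs
    have hz : (0:ℝ) < z := hz
    rw [norm_mul, norm_mul, Complex.norm_cpow_eq_rpow_re_of_pos hz, Complex.norm_exp]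
    have h1 : (-s * (z:ℂ)).re = -s.re * z := by
      simp [Complex.mul_re]
    rw [h1]
    have h2 : ‖(-1 * (z:ℂ))‖ = z := by
      simp [abs_of_pos hz]
    rw [h2]
    have h3 : Real.exp (-s.re * z) ≤ Real.exp (-ε * z) := by
      apply Real.exp_le_exp.mpr
      have := hball s hs
      nlinarith
    have h4 : z ^ ν * z = z ^ (ν + 1) := by
      rw [Real.rpow_add hz, Real.rpow_one]
    calc (z:ℝ) ^ (ν:ℂ).re * (Real.exp (-s.re * z) * z)
        ≤ z ^ (ν:ℂ).re * (Real.exp (-ε * z) * z) := by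
          apply mul_le_mul_of_nonneg_left _ (Real.rpow_nonneg hz.le _)
          exact mul_le_mul_of_nonneg_right h3 hz.le
      _ = z ^ (ν+1) * Real.exp (-ε * z) := by
          simp only [Complex.ofReal_re]; rw [← h4]; ring
  have hbint : Integrable (fun z : ℝ => z ^ (ν+1) * Real.exp (-ε * z)) (volume.restrict (Ioi 0)) := by
    have h := integrableOn_rpow_mul_exp_neg_mul_rpow (p := 1) (s := ν+1) (b := ε)
      (by linarith) one_pos hε0
    exact h.congr_fun (fun x hx => by simp only [Real.rpow_one]) measurableSet_Ioi
  have hderiv : ∀ᵐ (z:ℝ) ∂(volume.restrict (Ioi 0)), ∀ s ∈ Metric.ball s₀ ε,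
      HasDerivAt (fun s : ℂ => (z:ℂ) ^ (ν:ℂ) * Complex.exp (-s * z))
        ((z:ℂ) ^ (ν:ℂ) * (Complex.exp (-s * z) * (-1 * z))) s := by
    filter_upwards [ae_restrict_mem measurableSet_Ioi] with z hz s hs
    have h1 : HasDerivAt (fun s : ℂ => -s * (z:ℂ)) (-1 * z) s :=
      (hasDerivAt_id s).neg.mul_const (z:ℂ)
    exact (h1.cexp).const_mul ((z:ℂ) ^ (ν:ℂ))
  obtain ⟨-, hd⟩ := hasDerivAt_integral_of_dominated_loc_of_deriv_le
    (μ := volume.restrict (Ioi 0)) (x₀ := s₀)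
    (F := fun s (z : ℝ) => (z:ℂ) ^ (ν:ℂ) * Complex.exp (-s * z))
    (F' := fun s (z : ℝ) => (z:ℂ) ^ (ν:ℂ) * (Complex.exp (-s * z) * (-1 * z)))
    (bound := fun z : ℝ => z ^ (ν+1) * Real.exp (-ε * z))
    (Metric.ball_mem_nhds s₀ hε0) (Eventually.of_forall hmeas) (aux_integrable hν hs₀')
    (((Complex.measurable_ofReal.pow measurable_const).mul
      ((Complex.measurable_exp.comp (measurable_const.mul Complex.measurable_ofReal)).mul
        (measurable_const.mul Complex.measurable_ofReal))).aestronglyMeasurable)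
    hbound hbint hderiv
  exact hd.differentiableAt

lemma value {ν : ℝ} (hν : 0 ≤ ν) {s : ℂ} (hs : 0 < s.re) :
    ∫ z in Ioi (0:ℝ), (z:ℂ) ^ (ν:ℂ) * Complex.exp (-s * z)
      = Complex.Gamma ((ν:ℂ)+1) * s ^ (-((ν:ℂ)+1)) := by
  have hU : IsOpen {s : ℂ | 0 < s.re} := isOpen_lt continuous_const Complex.continuous_re
  have hg : DifferentiableOn ℂ (fun s : ℂ => Complex.Gamma ((ν:ℂ)+1) * s ^ (-((ν:ℂ)+1)))
      {s : ℂ | 0 < s.re} := by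
    intro x hx
    have hx' : (0:ℝ) < x.re := hx
    exact ((differentiableAt_id.cpow (differentiableAt_const _) (Or.inl hx')).const_mul _).differentiableWithinAt
  have hpre : IsPreconnected {s : ℂ | 0 < s.re} := (convex_halfSpace_re_gt (0:ℝ)).isPreconnected
  have h1 : (1:ℂ) ∈ {s : ℂ | 0 < s.re} := by simp
  have htend : Tendsto (fun n : ℕ => ((1 + ((n:ℝ)+1)⁻¹ : ℝ) : ℂ)) atTop (𝓝[≠] (1:ℂ)) := by
    apply tendsto_nhdsWithin_of_tendsto_nhds_of_eventually_within
    · have hr : Tendsto (fun n : ℕ => (1 + ((n:ℝ)+1)⁻¹ : ℝ)) atTop (𝓝 (1:ℝ)) := by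
        have := tendsto_one_div_add_atTop_nhds_zero_nat (𝕜 := ℝ)
        simpa [one_div] using tendsto_const_nhds.add this
      have := (Complex.continuous_ofReal.tendsto 1).comp hr
      simpa [Function.comp_def] using this
    · apply Eventually.of_forall
      intro n
      simp only [mem_compl_iff, mem_singleton_iff]
      intro h
      have : (1 + ((n:ℝ)+1)⁻¹ : ℝ) = 1 := by exact_mod_cast h
      have hpos : (0:ℝ) < ((n:ℝ)+1)⁻¹ := by positivity
      linarith
  have hfreq : ∃ᶠ z in 𝓝[≠] (1:ℂ),
      (∫ w in Ioi (0:ℝ), (w:ℂ) ^ (ν:ℂ) * Complex.exp (-z * w))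
        = Complex.Gamma ((ν:ℂ)+1) * z ^ (-((ν:ℂ)+1)) := by
    apply htend.frequently
    apply Frequently.of_forall
    intro n
    have hr : (0:ℝ) < 1 + ((n:ℝ)+1)⁻¹ := by positivity
    exact value_real hν hr
  have heq := AnalyticOnNhd.eqOn_of_preconnected_of_frequently_eq
    ((Fdiff hν).analyticOnNhd hU) (hg.analyticOnNhd hU) hpre h1 hfreq
  exact heq hs

lemma G_eq {ν : ℝ} (hν : 0 ≤ ν) (t : ℝ) :
    G 0 ν (Complex.I * t) = Complex.Gamma ((ν:ℂ)+1) * (1 + Complex.I * t) ^ (-((ν:ℂ)+1)) := by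
  have hre : (0:ℝ) < (1 + Complex.I * t).re := by simp
  rw [← value hν hre]
  unfold G
  refine setIntegral_congr_fun measurableSet_Ioi (fun z hz => ?_)
  have hz : (0:ℝ) < z := hz
  rw [zero_add, Real.rpow_one, div_one, Complex.ofReal_mul, Complex.ofReal_exp,
    Complex.ofReal_cpow hz.le, mul_assoc, ← Complex.exp_add]
  congr 2
  push_cast
  ring

lemma arg_one_add_I_mul (t : ℝ) : Complex.arg (1 + Complex.I * t) = Real.arctan t := by
  have hre : (0:ℝ) < (1 + Complex.I * t).re := by simp
  have habs : |Complex.arg (1 + Complex.I * t)| < Real.pi / 2 :=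
    Complex.abs_arg_lt_pi_div_two_iff.mpr (Or.inl hre)
  have htan := Complex.tan_arg (1 + Complex.I * t)
  have h1 : (1 + Complex.I * t).im = t := by simp
  have h2 : (1 + Complex.I * t).re = 1 := by simp
  rw [h1, h2, div_one] at htan
  have h3 := Real.arctan_tan (neg_lt_of_abs_lt habs) (lt_of_abs_lt habs)
  rw [htan] at h3
  exact h3.symm

lemma trig {x : ℝ} (hx : 0 < x) :
    (Real.cos x = 0 ∧ 0 < Real.sin x) ↔ ∃ k : ℕ, x = Real.pi/2 * (1 + 4*(k:ℝ)) := by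
  constructor
  · rintro ⟨hc, hs⟩
    obtain ⟨n, hn⟩ := Real.cos_eq_zero_iff.mp hc
    have hxn : x = Real.pi/2 + (n:ℝ) * Real.pi := by rw [hn]; ring
    have hsin : Real.sin x = (-1:ℝ)^n := by
      rw [hxn, Real.sin_add_int_mul_pi, Real.sin_pi_div_two, mul_one]
    have hev : Even n := by
      rcases Int.even_or_odd n with h | h
      · exact h
      · exfalso; rw [hsin, h.neg_one_zpow] at hs; linarith
    obtain ⟨m, hm⟩ := hev
    have hx2 : x = Real.pi/2 * (1 + 4*(m:ℝ)) := by
      rw [hxn, hm]; push_cast; ring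
    have hm0 : 0 ≤ m := by
      by_contra h
      push_neg at h
      have hm1 : (m:ℝ) ≤ -1 := by
        have h' : m ≤ -1 := by omega
        exact_mod_cast h'
      have : x ≤ Real.pi/2 * (1 + 4*(-1:ℝ)) := by
        rw [hx2]
        apply mul_le_mul_of_nonneg_left _ (by positivity)
        linarith
      nlinarith [Real.pi_pos]
    lift m to ℕ using hm0 with k
    exact ⟨k, by exact_mod_cast hx2⟩
  · rintro ⟨k, rfl⟩
    have h1 : Real.pi/2 * (1 + 4*(k:ℝ)) = Real.pi/2 + ((k:ℤ):ℝ) * (2 * Real.pi) := by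
      push_cast; ring
    constructor
    · rw [h1, Real.cos_add_int_mul_two_pi, Real.cos_pi_div_two]
    · have h2 : Real.pi/2 * (1 + 4*(k:ℝ)) = Real.pi/2 + ((2*k:ℤ):ℝ) * Real.pi := by
        push_cast; ring
      rw [h2, Real.sin_add_int_mul_pi, Real.sin_pi_div_two, mul_one]
      have : Even (2*(k:ℤ)) := ⟨k, by ring⟩
      rw [this.neg_one_zpow]
      norm_num

lemma c_re_im {ν t : ℝ} :
    (Complex.Gamma ((ν:ℂ)+1) * (1 + Complex.I * t) ^ (-((ν:ℂ)+1))).re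
      = (Real.Gamma (ν+1) * Real.exp (-(ν+1) * Real.log (‖1 + Complex.I * t‖)))
        * Real.cos ((ν+1) * Real.arctan t) ∧
    (Complex.Gamma ((ν:ℂ)+1) * (1 + Complex.I * t) ^ (-((ν:ℂ)+1))).im
      = -((Real.Gamma (ν+1) * Real.exp (-(ν+1) * Real.log (‖1 + Complex.I * t‖)))
        * Real.sin ((ν+1) * Real.arctan t)) := by
  have hs0 : (1 + Complex.I * t) ≠ 0 := by
    intro h
    have := congrArg Complex.re h
    simp at this
  have hΓ : Complex.Gamma ((ν:ℂ)+1) = ((Real.Gamma (ν+1) : ℝ) : ℂ) := by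
    rw [show ((ν:ℂ)+1) = ((ν+1:ℝ):ℂ) by push_cast; ring, Complex.Gamma_ofReal]
  have hexp : -((ν:ℂ)+1) = ((-(ν+1):ℝ):ℂ) := by push_cast; ring
  rw [hΓ, hexp, Complex.cpow_def_of_ne_zero hs0]
  have hlog : (Complex.log (1 + Complex.I * t) * ((-(ν+1):ℝ):ℂ)).re
      = -(ν+1) * Real.log (‖1 + Complex.I * t‖) := by
    simp [Complex.mul_re, Complex.log_re]
    ring
  have hlogim : (Complex.log (1 + Complex.I * t) * ((-(ν+1):ℝ):ℂ)).im
      = -((ν+1) * Real.arctan t) := by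
    simp [Complex.mul_im, Complex.log_im, arg_one_add_I_mul]
    ring
  constructor
  · rw [Complex.mul_re, Complex.ofReal_re, Complex.ofReal_im, Complex.exp_re, hlog, hlogim,
      Real.cos_neg]
    ring
  · rw [Complex.mul_im, Complex.ofReal_re, Complex.ofReal_im, Complex.exp_im, hlog, hlogim,
      Real.sin_neg]
    ring

/-- For `β = 0`: `λ = it` (with `t > 0`) is a purely imaginary eigenvalue for some
`ϑ > 0` iff `arctan t = (π/2)(1+4k)/(1+ν)` for some nonnegative integer `k` with
`4k < ν`. -/
theorem stmt1 (ν t : ℝ) (hν : 0 ≤ ν) (ht : 0 < t) :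
    (∃ ϑ : ℝ, 0 < ϑ ∧
        (ϑ : ℂ) * (Complex.I * (t : ℂ)) + G 0 ν (Complex.I * (t : ℂ)) = 0) ↔
      (∃ k : ℕ, 4 * (k : ℝ) < ν ∧
        Real.arctan t = Real.pi / 2 * (1 + 4 * (k : ℝ)) / (1 + ν)) := by
  set c : ℂ := Complex.Gamma ((ν:ℂ)+1) * (1 + Complex.I * t) ^ (-((ν:ℂ)+1)) with hc
  set A : ℝ := Real.Gamma (ν+1) * Real.exp (-(ν+1) * Real.log (‖1 + Complex.I * t‖))
    with hA
  set x : ℝ := (ν+1) * Real.arctan t with hx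
  have hA0 : 0 < A := by
    apply mul_pos (Real.Gamma_pos_of_pos (by linarith)) (Real.exp_pos _)
  have hθ0 : 0 < Real.arctan t := by
    rw [← Real.arctan_zero]
    exact Real.arctan_strictMono ht
  have hθπ : Real.arctan t < Real.pi / 2 := Real.arctan_lt_pi_div_two t
  have hx0 : 0 < x := by
    apply mul_pos (by linarith) hθ0
  obtain ⟨hcre, hcim⟩ := c_re_im (ν := ν) (t := t)
  have step1 : (∃ ϑ : ℝ, 0 < ϑ ∧
      (ϑ : ℂ) * (Complex.I * (t : ℂ)) + G 0 ν (Complex.I * (t : ℂ)) = 0)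
      ↔ (c.re = 0 ∧ c.im < 0) := by
    rw [G_eq hν t, ← hc]
    constructor
    · rintro ⟨ϑ, hϑ, heq⟩
      rw [Complex.ext_iff] at heq
      obtain ⟨h1, h2⟩ := heq
      simp [Complex.add_re, Complex.add_im, Complex.mul_re, Complex.mul_im] at h1 h2
      refine ⟨by linarith, ?_⟩
      have : c.im = -(ϑ * t) := by linarith
      rw [this]
      have := mul_pos hϑ ht
      linarith
    · rintro ⟨h1, h2⟩
      refine ⟨-c.im / t, div_pos (by linarith) ht, ?_⟩
      rw [Complex.ext_iff]
      constructor
      · simp [Complex.add_re, Complex.mul_re, h1]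
      · simp [Complex.add_im, Complex.mul_im]
        field_simp
        ring
  have step2 : (c.re = 0 ∧ c.im < 0) ↔ (Real.cos x = 0 ∧ 0 < Real.sin x) := by
    rw [hcre, hcim]
    constructor
    · rintro ⟨h1, h2⟩
      constructor
      · rcases mul_eq_zero.mp h1 with h | h
        · exact absurd h hA0.ne'
        · exact h
      · nlinarith
    · rintro ⟨h1, h2⟩
      exact ⟨by rw [h1, mul_zero], by nlinarith⟩
  have step3 : (∃ k : ℕ, x = Real.pi/2 * (1 + 4*(k:ℝ))) ↔
      (∃ k : ℕ, 4 * (k : ℝ) < ν ∧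
        Real.arctan t = Real.pi / 2 * (1 + 4 * (k : ℝ)) / (1 + ν)) := by
    constructor
    · rintro ⟨k, hk⟩
      refine ⟨k, ?_, ?_⟩
      · have hlt : Real.pi/2 * (1 + 4*(k:ℝ)) < (ν+1) * (Real.pi/2) := by
          rw [← hk, hx]
          have : (0:ℝ) < ν + 1 := by linarith
          exact mul_lt_mul_of_pos_left hθπ this
        have hpi2 : (0:ℝ) < Real.pi/2 := by positivity
        nlinarith
      · rw [hx] at hk
        field_simp
        linarith [hk]
    · rintro ⟨k, hk1, hk2⟩
      refine ⟨k, ?_⟩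
      rw [hx, hk2]
      field_simp
      ring
  rw [step1, step2, trig hx0, step3]

end Aux
end

section
/- Let ν > 0 and let k be a nonnegative integer with 4k < ν, and set t₀ = tan(ω_k) with ω_k = (π/2)·(1+4k)/(1+ν) ∈ (0, π/2). Then the function t ↦ Re G_{0,ν}(it) has a strictly negative derivative at t = t₀. (This is the transversal eigenvalue-crossing condition at the Hopf bifurcation points in the case β = 0, and implies sign Re(dλ/dϑ) < 0 at each crossing.) -/
open MeasureTheory Set Complex

noncomputable def Fz (ν : ℝ) (t z : ℝ) : ℂ :=
  ((z ^ ν * Real.exp (-z) : ℝ) : ℂ) * Complex.exp (-(Complex.I * (t : ℂ)) * (z : ℂ))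

lemma norm_Fz (ν : ℝ) (t : ℝ) {z : ℝ} (hz : 0 ≤ z) :
    ‖Fz ν t z‖ = z ^ ν * Real.exp (-z) := by
  have h1 : -(Complex.I * (t : ℂ)) * (z : ℂ) = ((-(t * z) : ℝ) : ℂ) * Complex.I := by
    push_cast; ring
  rw [Fz, norm_mul, h1, Complex.norm_exp_ofReal_mul_I,
    Complex.norm_real, Real.norm_eq_abs, mul_one, _root_.abs_of_nonneg
      (mul_nonneg (Real.rpow_nonneg hz ν) (Real.exp_pos _).le)]

lemma intpow {p : ℝ} (hp : 0 < p) :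
    IntegrableOn (fun z : ℝ => z ^ p * Real.exp (-z)) (Set.Ioi 0) := by
  have := Real.GammaIntegral_convergent (by linarith : (0:ℝ) < p + 1)
  simp only [add_sub_cancel_right] at this
  exact this.congr_fun (fun z _ => mul_comm _ _) measurableSet_Ioi

lemma contFz (ν : ℝ) (hν : 0 < ν) (t : ℝ) : ContinuousOn (Fz ν t) (Set.Ioi 0) := by
  apply ContinuousOn.mul
  · apply Complex.continuous_ofReal.comp_continuousOn
    apply ContinuousOn.mul
    · exact fun z hz => (Real.continuousAt_rpow_const z ν (Or.inl (ne_of_gt hz))).continuousWithinAt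
    · exact (Real.continuous_exp.comp continuous_neg).continuousOn
  · exact (Complex.continuous_exp.comp (by continuity)).continuousOn

lemma intFz (ν : ℝ) (hν : 0 < ν) (t : ℝ) : IntegrableOn (Fz ν t) (Set.Ioi 0) := by
  refine Integrable.mono' (intpow hν) ((contFz ν hν t).aestronglyMeasurable measurableSet_Ioi) ?_
  filter_upwards [ae_restrict_mem measurableSet_Ioi] with z hz
  exact le_of_eq (norm_Fz ν t (le_of_lt hz))

lemma derivFz (ν : ℝ) {z : ℝ} (hz : 0 < z) (t : ℝ) :
    HasDerivAt (fun u : ℝ => Fz ν u z) (-Complex.I * Fz (ν + 1) t z) t := by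
  have h0 : HasDerivAt (fun t : ℝ => (t : ℂ)) 1 t := Complex.ofRealCLM.hasDerivAt
  have hlin : HasDerivAt (fun u : ℝ => -(Complex.I * (u : ℂ)) * (z : ℂ))
      (-(Complex.I * (z : ℂ))) t := by
    have := ((h0.const_mul Complex.I).neg.mul_const (z : ℂ))
    simpa using this
  have hexp := hlin.cexp
  have := hexp.const_mul ((z ^ ν * Real.exp (-z) : ℝ) : ℂ)
  refine this.congr_deriv ?_
  have hzz : (z : ℝ) ^ (ν + 1) = z ^ ν * z := Real.rpow_add_one (ne_of_gt hz) ν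
  simp only [Fz, hzz]
  push_cast
  ring

lemma hasDerivAt_g (ν : ℝ) (hν : 0 < ν) (t : ℝ) :
    HasDerivAt (fun u : ℝ => ∫ z in Set.Ioi (0:ℝ), Fz ν u z)
      (-Complex.I * ∫ z in Set.Ioi (0:ℝ), Fz (ν + 1) t z) t := by
  have hν1 : (0:ℝ) < ν + 1 := by linarith
  have h := hasDerivAt_integral_of_dominated_loc_of_deriv_le
    (μ := volume.restrict (Set.Ioi (0:ℝ))) (x₀ := t)
    (F := fun u z => Fz ν u z) (F' := fun u z => -Complex.I * Fz (ν + 1) u z)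
    (bound := fun z => z ^ (ν + 1) * Real.exp (-z)) Filter.univ_mem
    (Filter.Eventually.of_forall fun u =>
      (contFz ν hν u).aestronglyMeasurable measurableSet_Ioi)
    (intFz ν hν t)
    (((contFz (ν+1) hν1 t).aestronglyMeasurable measurableSet_Ioi).const_mul (-Complex.I))
    ?_ (intpow hν1) ?_
  · have h2 := h.2
    rwa [MeasureTheory.integral_const_mul] at h2
  · filter_upwards [ae_restrict_mem measurableSet_Ioi] with z hz u _
    rw [norm_mul, norm_neg, Complex.norm_I, one_mul, norm_Fz _ _ (le_of_lt hz)]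
  · filter_upwards [ae_restrict_mem measurableSet_Ioi] with z hz u _
    exact derivFz ν hz u

lemma exp_split (t z : ℝ) : Complex.exp (-(1 + Complex.I * (t:ℂ)) * (z:ℂ)) =
    ((Real.exp (-z) : ℝ) : ℂ) * Complex.exp (-(Complex.I * (t:ℂ)) * (z:ℂ)) := by
  rw [Complex.ofReal_exp, ← Complex.exp_add]
  congr 1
  push_cast
  ring

lemma ibp (ν : ℝ) (hν : 0 < ν) (t : ℝ) :
    ((ν : ℂ) + 1) * ∫ z in Set.Ioi (0:ℝ), Fz ν t z =
      (1 + Complex.I * (t:ℂ)) * ∫ z in Set.Ioi (0:ℝ), Fz (ν + 1) t z := by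
  have hν1 : (0:ℝ) < ν + 1 := by linarith
  set w : ℂ := 1 + Complex.I * (t:ℂ) with hw
  set φ : ℝ → ℂ := fun z => ((z ^ (ν+1) : ℝ) : ℂ) * Complex.exp (-w * (z:ℂ)) with hφ
  set φ' : ℝ → ℂ := fun z => ((ν+1:ℝ) : ℂ) * Fz ν t z - w * Fz (ν+1) t z with hφ'
  have h0 : HasDerivAt (fun u : ℝ => (u : ℂ)) 1 0 := Complex.ofRealCLM.hasDerivAt
  have hderiv : ∀ x ∈ Set.Ioi (0:ℝ), HasDerivAt φ (φ' x) x := by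
    intro x hx
    rw [Set.mem_Ioi] at hx
    have h1 : HasDerivAt (fun z : ℝ => z ^ (ν+1)) ((ν+1) * x ^ ν) x := by
      have := Real.hasDerivAt_rpow_const (x := x) (p := ν+1) (Or.inl (ne_of_gt hx))
      simpa [add_sub_cancel_right] using this
    have h1' := h1.ofReal_comp
    have h2 : HasDerivAt (fun z : ℝ => Complex.exp (-w * (z:ℂ))) (-w * Complex.exp (-w * (x:ℂ))) x := by
      have hl : HasDerivAt (fun z : ℝ => -w * (z:ℂ)) (-w) x := by
        simpa using (Complex.ofRealCLM.hasDerivAt (x := x)).const_mul (-w)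
      have := hl.cexp
      convert this using 1
      ring
    have := h1'.mul h2
    refine this.congr_deriv ?_
    have hzz : (x : ℝ) ^ (ν + 1) = x ^ ν * x := Real.rpow_add_one (ne_of_gt hx) ν
    simp only [hφ', hw, Fz, exp_split, hzz]
    push_cast
    simp only [sub_eq_add_neg, Complex.exp_add]
    ring
  have hcont : ContinuousWithinAt φ (Set.Ici (0:ℝ)) 0 := by
    apply ContinuousAt.continuousWithinAt
    apply ContinuousAt.mul
    · exact Complex.continuous_ofReal.continuousAt.comp
        (Real.continuousAt_rpow_const 0 (ν+1) (Or.inr hν1.le))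
    · exact (Complex.continuous_exp.comp (by continuity)).continuousAt
  have hint : IntegrableOn φ' (Set.Ioi (0:ℝ)) :=
    ((intFz ν hν t).const_mul _).sub ((intFz (ν+1) hν1 t).const_mul w)
  have htend : Filter.Tendsto φ Filter.atTop (nhds 0) := by
    refine squeeze_zero_norm' (a := fun z : ℝ => z ^ (ν+1) * Real.exp (-z)) ?_ ?_
    · filter_upwards [Filter.eventually_ge_atTop (0:ℝ)] with z hz
      have hsplit : -w * (z:ℂ) = ((-z : ℝ) : ℂ) + ((-(t*z) : ℝ) : ℂ) * Complex.I := by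
        rw [hw]; push_cast; ring
      rw [hφ]
      simp only
      rw [norm_mul, hsplit, Complex.exp_add, norm_mul, Complex.norm_exp_ofReal_mul_I,
        Complex.norm_real, Real.norm_eq_abs, mul_one, ← Complex.ofReal_exp, Complex.norm_real, Real.norm_eq_abs,
        _root_.abs_of_nonneg (Real.rpow_nonneg hz _),
        _root_.abs_of_nonneg (Real.exp_pos _).le]
    · have := tendsto_rpow_mul_exp_neg_mul_atTop_nhds_zero (ν+1) 1 one_pos
      simpa using this
  have hFTC := MeasureTheory.integral_Ioi_of_hasDerivAt_of_tendsto hcont hderiv hint htend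
  have hphi0 : φ 0 = 0 := by
    simp [hφ, Real.zero_rpow (ne_of_gt hν1)]
  rw [hphi0, sub_zero] at hFTC
  have hsub : ∫ z in Set.Ioi (0:ℝ), φ' z =
      (((ν+1:ℝ)) : ℂ) * (∫ z in Set.Ioi (0:ℝ), Fz ν t z) -
        w * ∫ z in Set.Ioi (0:ℝ), Fz (ν+1) t z := by
    rw [hφ']
    rw [MeasureTheory.integral_sub ((intFz ν hν t).const_mul _) ((intFz (ν+1) hν1 t).const_mul w),
      MeasureTheory.integral_const_mul, MeasureTheory.integral_const_mul]
  rw [hFTC] at hsub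
  push_cast at hsub ⊢
  linear_combination -hsub

lemma hne (u : ℝ) : (1 + Complex.I * (u:ℂ)) ≠ 0 := by
  intro h
  have := congrArg Complex.re h
  simp at this

lemma hslit (u : ℝ) : (1 + Complex.I * (u:ℂ)) ∈ Complex.slitPlane := by
  rw [Complex.mem_slitPlane_iff]
  left
  simp

lemma g_eq (ν : ℝ) (hν : 0 < ν) (t : ℝ) :
    (∫ z in Set.Ioi (0:ℝ), Fz ν t z) * (1 + Complex.I * (t:ℂ)) ^ ((ν:ℂ)+1) =
      ((Real.Gamma (ν+1) : ℝ) : ℂ) := by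
  have hν1 : (0:ℝ) < ν + 1 := by linarith
  set q : ℝ → ℂ := fun u => (∫ z in Set.Ioi (0:ℝ), Fz ν u z) *
      (1 + Complex.I * (u:ℂ)) ^ ((ν:ℂ)+1) with hq
  have hqd : ∀ u : ℝ, HasDerivAt q 0 u := by
    intro u
    have hbase : HasDerivAt (fun u : ℝ => 1 + Complex.I * (u:ℂ)) Complex.I u := by
      simpa using ((Complex.ofRealCLM.hasDerivAt (x := u)).const_mul Complex.I).const_add 1
    have hcp : HasDerivAt (fun z : ℂ => z ^ ((ν:ℂ)+1))
        (((ν:ℂ)+1) * (1 + Complex.I * (u:ℂ)) ^ (((ν:ℂ)+1)-1)) (1 + Complex.I * (u:ℂ)) :=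
      (Complex.hasStrictDerivAt_cpow_const (hslit u)).hasDerivAt
    have hpow : HasDerivAt (fun u : ℝ => (1 + Complex.I * (u:ℂ)) ^ ((ν:ℂ)+1))
        (Complex.I * (((ν:ℂ)+1) * (1 + Complex.I * (u:ℂ)) ^ (((ν:ℂ)+1)-1))) u := by
      have := hcp.comp u hbase
      simpa [Function.comp_def, mul_comm] using this
    have hmul := (hasDerivAt_g ν hν u).mul hpow
    have hval : (-Complex.I * ∫ z in Set.Ioi (0:ℝ), Fz (ν+1) u z) *
          (1 + Complex.I * (u:ℂ)) ^ ((ν:ℂ)+1) +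
        (∫ z in Set.Ioi (0:ℝ), Fz ν u z) *
          (Complex.I * (((ν:ℂ)+1) * (1 + Complex.I * (u:ℂ)) ^ (((ν:ℂ)+1)-1))) = 0 := by
      have hA : (1 + Complex.I * (u:ℂ)) ^ ((ν:ℂ)+1) =
          (1 + Complex.I * (u:ℂ)) ^ (((ν:ℂ)+1)-1) * (1 + Complex.I * (u:ℂ)) := by
        nth_rewrite 1 [show ((ν:ℂ)+1) = (((ν:ℂ)+1)-1)+1 by ring]
        rw [Complex.cpow_add _ _ (hne u), Complex.cpow_one]
      rw [hA]
      linear_combination ((1 + Complex.I * (u:ℂ)) ^ (((ν:ℂ)+1)-1) * Complex.I) * (ibp ν hν u)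
    rw [hq]
    rw [hval] at hmul
    exact hmul
  have hconst : q t = q 0 :=
    is_const_of_deriv_eq_zero (fun u => (hqd u).differentiableAt) (fun u => (hqd u).deriv) t 0
  have hg0 : (∫ z in Set.Ioi (0:ℝ), Fz ν 0 z) = ((Real.Gamma (ν+1) : ℝ) : ℂ) := by
    have h1 : ∀ z : ℝ, Fz ν 0 z = ((z ^ ν * Real.exp (-z) : ℝ) : ℂ) := by
      intro z; simp [Fz]
    simp_rw [h1]
    have : ∫ z in Set.Ioi (0:ℝ), ((z ^ ν * Real.exp (-z) : ℝ) : ℂ) =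
        ((∫ z in Set.Ioi (0:ℝ), z ^ ν * Real.exp (-z) : ℝ) : ℂ) := by
      exact _root_.integral_ofReal
    rw [this]
    norm_cast
    rw [Real.Gamma_eq_integral hν1]
    simp only [add_sub_cancel_right]
    exact MeasureTheory.setIntegral_congr_fun measurableSet_Ioi (fun z _ => mul_comm _ _)
  calc (∫ z in Set.Ioi (0:ℝ), Fz ν t z) * (1 + Complex.I * (t:ℂ)) ^ ((ν:ℂ)+1)
      = q t := rfl
    _ = q 0 := hconst
    _ = ((Real.Gamma (ν+1) : ℝ) : ℂ) := by
        rw [hq]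
        simp only [Complex.ofReal_zero, mul_zero, add_zero, Complex.one_cpow, mul_one, hg0]


theorem stmt2' (ν : ℝ) (hν : 0 < ν) (k : ℕ) (hk : 4 * (k : ℝ) < ν) :
    ∃ d : ℝ, d < 0 ∧
      HasDerivAt (fun t : ℝ => ((∫ z in Set.Ioi (0:ℝ), Fz ν t z)).re) d
        (Real.tan (Real.pi / 2 * (1 + 4 * (k : ℝ)) / (1 + ν))) := by
  have hν1 : (0:ℝ) < ν + 1 := by linarith
  have hπ := Real.pi_pos
  obtain ⟨ω, hωdef⟩ : ∃ w : ℝ, w = Real.pi / 2 * (1 + 4 * (k:ℝ)) / (1 + ν) := ⟨_, rfl⟩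
  rw [← hωdef]
  have h1k : (0:ℝ) < 1 + 4*k := by positivity
  have h1ν : (0:ℝ) < 1 + ν := by linarith
  have hω_pos : 0 < ω := by rw [hωdef]; positivity
  have hω_lt : ω < Real.pi/2 := by
    rw [hωdef, div_lt_iff₀ h1ν]
    nlinarith [hπ, hk]
  have hθ : (ν+2)*ω = (ω + Real.pi/2) + (k : ℝ) * (2*Real.pi) := by
    rw [hωdef]; field_simp; ring
  have hc : 0 < Real.cos ω := Real.cos_pos_of_mem_Ioo ⟨by linarith, hω_lt⟩
  have hsin : Real.sin ((ν+2)*ω) = Real.cos ω := by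
    rw [hθ, Real.sin_add_nat_mul_two_pi, Real.sin_add_pi_div_two]
  clear hθ hωdef hk h1k h1ν
  obtain ⟨t₀, ht₀⟩ : ∃ t : ℝ, t = Real.tan ω := ⟨_, rfl⟩
  rw [← ht₀]
  obtain ⟨z₀, hz₀def⟩ : ∃ z : ℂ, z = 1 + Complex.I * (t₀:ℂ) := ⟨_, rfl⟩
  have hz0 : z₀ ≠ 0 := hz₀def ▸ hne t₀
  have hcC : ((Real.cos ω : ℝ) : ℂ) ≠ 0 := by exact_mod_cast hc.ne'
  have hz₀ : z₀ = ((Real.cos ω)⁻¹ : ℝ) * Complex.exp ((ω:ℂ) * Complex.I) := by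
    rw [hz₀def, Complex.exp_mul_I, ← Complex.ofReal_cos, ← Complex.ofReal_sin,
      ht₀, Real.tan_eq_sin_div_cos]
    have hccos : Complex.cos (ω:ℂ) ≠ 0 := by rw [← Complex.ofReal_cos]; exact hcC
    push_cast
    field_simp
  have habs : ‖z₀‖ = (Real.cos ω)⁻¹ := by
    rw [hz₀, norm_mul, Complex.norm_real, Real.norm_eq_abs, Complex.norm_exp_ofReal_mul_I, mul_one,
      _root_.abs_of_pos (inv_pos.mpr hc)]
  have harg : Complex.arg z₀ = ω := by
    rw [hz₀, Complex.arg_real_mul _ (inv_pos.mpr hc), Complex.exp_mul_I,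
      Complex.arg_cos_add_sin_mul_I ⟨by linarith, by linarith⟩]
  obtain ⟨L, hL⟩ : ∃ l : ℝ, l = Real.log (Real.cos ω)⁻¹ := ⟨_, rfl⟩
  have hlog : Complex.log z₀ = ((L : ℝ) : ℂ) + (ω:ℂ) * Complex.I := by
    apply Complex.ext
    · simp [Complex.log_re, habs, hL]
    · simp [Complex.log_im, harg]
  obtain ⟨Γr, hΓr⟩ : ∃ r : ℝ, r = Real.Gamma (ν+1) := ⟨_, rfl⟩
  have hΓ : 0 < Γr := hΓr ▸ Real.Gamma_pos_of_pos hν1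
  obtain ⟨g1, hg1⟩ : ∃ w : ℂ, w = ∫ z in Set.Ioi (0:ℝ), Fz (ν+1) t₀ z := ⟨_, rfl⟩
  refine ⟨(-Complex.I * g1).re, ?_, ?_⟩
  · -- negativity
    have hcpow : z₀ ^ ((ν:ℂ)+1) = Complex.exp (Complex.log z₀ * ((ν:ℂ)+1)) :=
      Complex.cpow_def_of_ne_zero hz0 _
    have hzc : z₀ ^ ((ν:ℂ)+1) ≠ 0 := by rw [hcpow]; exact Complex.exp_ne_zero _
    have hE : Complex.exp ((((ν:ℂ)+2)) * Complex.log z₀) = z₀ ^ ((ν:ℂ)+1) * z₀ := by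
      rw [hcpow]
      nth_rewrite 3 [← Complex.exp_log hz0]
      rw [← Complex.exp_add]
      congr 1
      ring
    have h1 := ibp ν hν t₀
    have h2 := g_eq ν hν t₀
    rw [← hz₀def] at h1 h2
    rw [← hg1] at h1
    rw [← hΓr] at h2
    have key : -Complex.I * g1 = -Complex.I * ((ν:ℂ)+1) * (Γr : ℂ) *
        Complex.exp (-(((ν:ℂ)+2) * Complex.log z₀)) := by
      rw [Complex.exp_neg, hE]
      refine (eq_mul_inv_iff_mul_eq₀ (mul_ne_zero hzc hz0)).mpr ?_
      linear_combination (Complex.I * z₀ ^ ((ν:ℂ)+1)) * h1 +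
        (-(Complex.I * ((ν:ℂ)+1))) * h2
    have hexp : -(((ν:ℂ)+2) * Complex.log z₀) =
        ((-((ν+2)*L) : ℝ) : ℂ) + ((-((ν+2)*ω) : ℝ) : ℂ) * Complex.I := by
      rw [hlog]; push_cast; ring
    have hre : (-Complex.I * g1).re =
        (ν+1) * Γr * Real.exp (-((ν+2)*L)) * (-Real.sin ((ν+2)*ω)) := by
      rw [key, hexp, Complex.exp_add]
      have e1 : Complex.exp (((-((ν+2)*L) : ℝ)) : ℂ) = ((Real.exp (-((ν+2)*L)) : ℝ) : ℂ) :=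
        (Complex.ofReal_exp _).symm
      have e2 : Complex.exp ((((-((ν+2)*ω)) : ℝ) : ℂ) * Complex.I) =
          ((Real.cos ((ν+2)*ω) : ℝ) : ℂ) - ((Real.sin ((ν+2)*ω) : ℝ) : ℂ) * Complex.I := by
        rw [Complex.exp_mul_I, ← Complex.ofReal_cos, ← Complex.ofReal_sin,
          Real.cos_neg, Real.sin_neg]
        push_cast
        ring
      rw [e1, e2]
      have e3 : -Complex.I * ((ν:ℂ)+1) * (Γr : ℂ) *
          (((Real.exp (-((ν+2)*L)) : ℝ) : ℂ) *
            (((Real.cos ((ν+2)*ω) : ℝ) : ℂ) - ((Real.sin ((ν+2)*ω) : ℝ) : ℂ) * Complex.I)) =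
          ((-((ν+1) * Γr * Real.exp (-((ν+2)*L)) * Real.sin ((ν+2)*ω)) : ℝ) : ℂ) +
            ((-((ν+1) * Γr * Real.exp (-((ν+2)*L)) * Real.cos ((ν+2)*ω)) : ℝ) : ℂ) * Complex.I := by
        apply Complex.ext <;> simp [Complex.mul_re, Complex.mul_im] <;> ring
      rw [e3]
      simp only [Complex.add_re, Complex.ofReal_re, Complex.mul_re, Complex.I_re,
        Complex.I_im, Complex.ofReal_im]
      ring
    rw [hre, hsin]
    have hpos : 0 < (ν+1) * Γr * Real.exp (-((ν+2)*L)) * Real.cos ω := by positivity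
    linarith
  · -- the derivative
    rw [hg1]
    have := Complex.reCLM.hasFDerivAt.comp_hasDerivAt t₀ (hasDerivAt_g ν hν t₀)
    simpa [Function.comp_def] using this

/-- Transversal eigenvalue crossing for `β = 0`: at `t₀ = tan ω_k` with
`ω_k = (π/2)(1+4k)/(1+ν)`, the function `t ↦ Re G_{0,ν}(it)` has a strictly
negative derivative. -/
theorem stmt2 (ν : ℝ) (hν : 0 < ν) (k : ℕ) (hk : 4 * (k : ℝ) < ν) :
    ∃ d : ℝ, d < 0 ∧
      HasDerivAt (fun t : ℝ => (G 0 ν (Complex.I * (t : ℂ))).re) d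
        (Real.tan (Real.pi / 2 * (1 + 4 * (k : ℝ)) / (1 + ν))) := by
  have hfun : (fun t : ℝ => (G 0 ν (Complex.I * (t : ℂ))).re) =
      (fun t : ℝ => ((∫ z in Set.Ioi (0:ℝ), Fz ν t z)).re) := by
    funext u
    congr 1
    simp [G, Fz, Real.rpow_one]
  rw [hfun]
  exact stmt2' ν hν k hk
end

section
/- Let β ≥ 0 and ν ≥ 0. The function λ ↦ G_{β,ν}(λ) is complex differentiable at every λ with Re(λ) > −1, with derivative G_{β,ν}'(λ) = −G_{β,ν+1}(λ). -/
open Set MeasureTheory Metric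

/-- Young-type inequality: `z - 1 ≤ z^(β+1)/(β+1)` for `z ≥ 0`, `β ≥ 0`. -/
lemma young_aux {β : ℝ} (hβ : 0 ≤ β) {z : ℝ} (hz : 0 ≤ z) :
    z - 1 ≤ z ^ (β + 1) / (β + 1) := by
  have h := one_add_mul_self_le_rpow_one_add (s := z - 1) (by linarith) (p := β + 1) (by linarith)
  rw [show (1 : ℝ) + (z - 1) = z by ring] at h
  rw [le_div_iff₀ (by linarith : (0:ℝ) < β + 1)]
  nlinarith

lemma contOn_aux (β ν : ℝ) (x : ℂ) :
    ContinuousOn (fun z : ℝ =>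
      ((z ^ ν * Real.exp (-z ^ (β + 1) / (β + 1)) : ℝ) : ℂ) * Complex.exp (-x * (z : ℂ)))
      (Set.Ioi 0) := by
  have h1 : ContinuousOn (fun z : ℝ => z ^ ν) (Set.Ioi 0) := fun z hz =>
    (Real.continuousAt_rpow_const z ν (Or.inl (ne_of_gt hz))).continuousWithinAt
  have h2 : ContinuousOn (fun z : ℝ => z ^ (β + 1)) (Set.Ioi 0) := fun z hz =>
    (Real.continuousAt_rpow_const z (β + 1) (Or.inl (ne_of_gt hz))).continuousWithinAt
  have h3 : ContinuousOn (fun z : ℝ => z ^ ν * Real.exp (-z ^ (β + 1) / (β + 1))) (Set.Ioi 0) :=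
    h1.mul (Real.continuous_exp.comp_continuousOn ((h2.neg).div_const _))
  exact (Complex.continuous_ofReal.comp_continuousOn h3).mul
    ((Complex.continuous_exp.comp (by continuity)).continuousOn)

/-- `G_{β,ν}` is complex differentiable for `Re λ > −1`, with
`G_{β,ν}'(λ) = −G_{β,ν+1}(λ)`. -/
theorem stmt5 (β ν : ℝ) (hβ : 0 ≤ β) (hν : 0 ≤ ν) (l : ℂ) (hl : -1 < l.re) :
    HasDerivAt (G β ν) (-(G β (ν + 1) l)) l := by
  set F : ℂ → ℝ → ℂ := fun x z =>
    ((z ^ ν * Real.exp (-z ^ (β + 1) / (β + 1)) : ℝ) : ℂ) * Complex.exp (-x * (z : ℂ)) with hF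
  set F' : ℂ → ℝ → ℂ := fun x z => -(z : ℂ) * F x z with hF'
  set ε : ℝ := (1 + l.re) / 2 with hε
  have hε_pos : 0 < ε := by rw [hε]; linarith
  set δ : ℝ := (l.re - 1) / 2 with hδ
  have hδε : l.re - ε = δ := by rw [hε, hδ]; ring
  have h1δ : 1 + δ = ε := by rw [hε, hδ]; ring
  -- real part estimate in the ball
  have hball : ∀ x ∈ ball l ε, δ ≤ x.re := by
    intro x hx
    have : |(x - l).re| ≤ ‖x - l‖ := Complex.abs_re_le_norm _
    rw [mem_ball, Complex.dist_eq] at hx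
    have := abs_le.mp (this.trans hx.le)
    simp only [Complex.sub_re] at this
    linarith [this.1, hδε ▸ (by linarith [this.1] : l.re - ε ≤ x.re)]
  -- the key pointwise bound
  have key : ∀ z ∈ Ioi (0:ℝ), ∀ c : ℝ, δ ≤ c → ∀ s : ℝ, 0 ≤ s →
      z ^ s * Real.exp (-z ^ (β + 1) / (β + 1)) * Real.exp (-c * z)
        ≤ Real.exp 1 * (z ^ s * Real.exp (-ε * z)) := by
    intro z hz c hc s hs
    rw [mem_Ioi] at hz
    have hzs : (0:ℝ) ≤ z ^ s := Real.rpow_nonneg hz.le _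
    have h1 : Real.exp (-z ^ (β + 1) / (β + 1)) * Real.exp (-c * z)
        ≤ Real.exp 1 * Real.exp (-ε * z) := by
      rw [← Real.exp_add, ← Real.exp_add]
      apply Real.exp_le_exp.mpr
      have hy := young_aux hβ hz.le
      have hy2 : -z ^ (β + 1) / (β + 1) ≤ 1 - z := by rw [neg_div]; linarith
      have : -c * z ≤ -δ * z := by nlinarith
      have h3 : -δ * z - z = -ε * z := by rw [← h1δ]; ring
      linarith
    calc z ^ s * Real.exp (-z ^ (β + 1) / (β + 1)) * Real.exp (-c * z)
        = z ^ s * (Real.exp (-z ^ (β + 1) / (β + 1)) * Real.exp (-c * z)) := by ring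
      _ ≤ z ^ s * (Real.exp 1 * Real.exp (-ε * z)) := by
          exact mul_le_mul_of_nonneg_left h1 hzs
      _ = Real.exp 1 * (z ^ s * Real.exp (-ε * z)) := by ring
  -- norm computation
  have hnorm : ∀ (x : ℂ) (z : ℝ), 0 < z → ‖F x z‖ =
      z ^ ν * Real.exp (-z ^ (β + 1) / (β + 1)) * Real.exp (-x.re * z) := by
    intro x z hz
    have hre : (-x * (z:ℂ)).re = -x.re * z := by simp [Complex.mul_re]
    rw [hF]
    simp only [norm_mul, Complex.norm_real, Real.norm_eq_abs, Complex.norm_exp, hre]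
    rw [abs_of_nonneg (by positivity), abs_of_nonneg (Real.exp_pos _).le]
  -- integrable bounds
  have hint : ∀ s : ℝ, 0 ≤ s →
      Integrable (fun z : ℝ => Real.exp 1 * (z ^ s * Real.exp (-ε * z)))
        (volume.restrict (Ioi 0)) := by
    intro s hs
    have := integrableOn_rpow_mul_exp_neg_mul_rpow (p := 1) (s := s) (b := ε)
      (by linarith) zero_lt_one hε_pos
    have h2 : IntegrableOn (fun z : ℝ => z ^ s * Real.exp (-ε * z)) (Ioi 0) := by
      refine this.congr_fun (fun z hz => ?_) measurableSet_Ioi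
      simp only [Real.rpow_one]
    exact (h2.const_mul _)
  -- measurability
  have hmeas : ∀ x : ℂ, AEStronglyMeasurable (F x) (volume.restrict (Ioi 0)) := fun x =>
    (contOn_aux β ν x).aestronglyMeasurable measurableSet_Ioi
  have hmeas' : AEStronglyMeasurable (F' l) (volume.restrict (Ioi 0)) := by
    exact (Complex.continuous_ofReal.continuousOn.neg.mul (contOn_aux β ν l)).aestronglyMeasurable
      measurableSet_Ioi
  -- integrability of F l
  have hFl_int : Integrable (F l) (volume.restrict (Ioi 0)) := by
    refine Integrable.mono' (hint ν hν) (hmeas l) ?_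
    filter_upwards [ae_restrict_mem measurableSet_Ioi] with z hz
    rw [hnorm l z hz]
    exact key z hz l.re (by rw [hδ]; linarith) ν hν
  -- the dominated bound for F'
  have h_bound : ∀ᵐ z ∂(volume.restrict (Ioi 0)), ∀ x ∈ ball l ε,
      ‖F' x z‖ ≤ Real.exp 1 * (z ^ (ν + 1) * Real.exp (-ε * z)) := by
    filter_upwards [ae_restrict_mem measurableSet_Ioi] with z hz x hx
    have hz' : (0:ℝ) < z := hz
    have : ‖F' x z‖ = z * ‖F x z‖ := by
      rw [hF']
      simp only [norm_mul, norm_neg, Complex.norm_real, Real.norm_eq_abs,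
        abs_of_nonneg hz'.le]
    rw [this, hnorm x z hz']
    have h2 : z * (z ^ ν * Real.exp (-z ^ (β + 1) / (β + 1)) * Real.exp (-x.re * z))
        = z ^ (ν + 1) * Real.exp (-z ^ (β + 1) / (β + 1)) * Real.exp (-x.re * z) := by
      rw [Real.rpow_add_one (ne_of_gt hz') ν]; ring
    rw [h2]
    exact key z hz x.re (hball x hx) (ν + 1) (by linarith)
  -- differentiability in x
  have h_diff : ∀ᵐ z ∂(volume.restrict (Ioi 0)), ∀ x ∈ ball l ε,
      HasDerivAt (F · z) (F' x z) x := by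
    refine Filter.Eventually.of_forall fun z x _ => ?_
    have h1 : HasDerivAt (fun x : ℂ => -x * (z:ℂ)) (-(z:ℂ)) x := by
      simpa using ((hasDerivAt_id x).neg.mul_const (z:ℂ))
    have h2 := (h1.cexp).const_mul
      (((z ^ ν * Real.exp (-z ^ (β + 1) / (β + 1)) : ℝ) : ℂ))
    refine h2.congr_deriv ?_
    rw [hF', hF]; ring
  have main := hasDerivAt_integral_of_dominated_loc_of_deriv_le (ball_mem_nhds l hε_pos)
    (Filter.Eventually.of_forall hmeas) hFl_int hmeas' h_bound (hint (ν + 1) (by linarith)) h_diff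
  have hG : (∫ z in Ioi (0:ℝ), F' l z) = -(G β (ν + 1) l) := by
    rw [show (∫ z in Ioi (0:ℝ), F' l z) = ∫ z in Ioi (0:ℝ), -((z:ℂ) * F l z) by
      congr 1; ext z; rw [hF']; ring, integral_neg, G]
    congr 1
    refine setIntegral_congr_fun measurableSet_Ioi fun z hz => ?_
    rw [mem_Ioi] at hz
    rw [hF]
    have : (z:ℝ) ^ (ν + 1) = z ^ ν * z := Real.rpow_add_one (ne_of_gt hz) ν
    push_cast [this]
    ring
  rw [← hG]
  exact main.2
end

section
/- Fix α ∈ [0,1), r ≥ 0 and η > 0. Let u : ℝ → ℝ be differentiable and let f : (0,∞) × ℝ → ℝ be continuously differentiable. Assume: (i) ∂_τ u(τ) = 1 − ∫₀^∞ x^α f(x,τ) dx for all τ; (ii) ∂_τ f(x,τ) + ∂_x(x^α f(x,τ)) = −η x^r f(x,τ) for all x > 0 and τ; (iii) x^α f(x,τ) → e^{u(τ)} as x → 0⁺ and x^{1+α} f(x,τ) → 0 as x → ∞, for each τ; (iv) for each τ, the functions x ↦ x f(x,τ), x ↦ x^α f(x,τ) and x ↦ x^{r+1} f(x,τ) are integrable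 on (0,∞), and x ↦ x·∂_τ f(x,τ) is dominated, locally uniformly in τ, by an integrable function of x. Then the total mass τ ↦ u(τ) + ∫₀^∞ x f(x,τ) dx is differentiable, and its derivative equals 1 − η ∫₀^∞ x^{r+1} f(x,τ) dx. -/
open MeasureTheory Set Filter

/-- Mass balance law for the Becker–Döring bubblelator limit model: under the stated
regularity, boundary, decay, integrability and domination assumptions, the total mass
`τ ↦ u(τ) + ∫₀^∞ x f(x,τ) dx` is differentiable with derivative
`1 − η ∫₀^∞ x^{r+1} f(x,τ) dx`. -/
theorem stmt15 (α r η : ℝ) (hα0 : 0 ≤ α) (hα1 : α < 1) (hr : 0 ≤ r) (hη : 0 < η)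
    (u : ℝ → ℝ) (f : ℝ → ℝ → ℝ)
    (hu : Differentiable ℝ u)
    (hf : ContDiffOn ℝ 1 (fun p : ℝ × ℝ => f p.1 p.2) (Set.Ioi 0 ×ˢ Set.univ))
    (hmono : ∀ τ : ℝ,
      HasDerivAt u (1 - ∫ x in Set.Ioi (0 : ℝ), x ^ α * f x τ) τ)
    (hPDE : ∀ x : ℝ, 0 < x → ∀ τ : ℝ,
      deriv (fun τ' => f x τ') τ + deriv (fun x' => x' ^ α * f x' τ) x
        = -η * x ^ r * f x τ)
    (hBC0 : ∀ τ : ℝ, Filter.Tendsto (fun x : ℝ => x ^ α * f x τ)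
      (nhdsWithin 0 (Set.Ioi 0)) (nhds (Real.exp (u τ))))
    (hBCinf : ∀ τ : ℝ, Filter.Tendsto (fun x : ℝ => x ^ (1 + α) * f x τ)
      Filter.atTop (nhds 0))
    (hint1 : ∀ τ : ℝ,
      MeasureTheory.IntegrableOn (fun x : ℝ => x * f x τ) (Set.Ioi 0))
    (hint2 : ∀ τ : ℝ,
      MeasureTheory.IntegrableOn (fun x : ℝ => x ^ α * f x τ) (Set.Ioi 0))
    (hint3 : ∀ τ : ℝ,
      MeasureTheory.IntegrableOn (fun x : ℝ => x ^ (r + 1) * f x τ) (Set.Ioi 0))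
    (hdom : ∀ τ₀ : ℝ, ∃ g : ℝ → ℝ, MeasureTheory.IntegrableOn g (Set.Ioi 0) ∧
      ∃ ε : ℝ, 0 < ε ∧ ∀ τ : ℝ, |τ - τ₀| < ε → ∀ x ∈ Set.Ioi (0 : ℝ),
        |x * deriv (fun τ' => f x τ') τ| ≤ g x) :
    ∀ τ : ℝ,
      HasDerivAt (fun τ' => u τ' + ∫ x in Set.Ioi (0 : ℝ), x * f x τ')
        (1 - η * ∫ x in Set.Ioi (0 : ℝ), x ^ (r + 1) * f x τ) τ := by
  intro τ₀
  have hS : IsOpen ((Set.Ioi (0:ℝ)) ×ˢ (Set.univ : Set ℝ)) := isOpen_Ioi.prod isOpen_univ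
  have hCD : ∀ x : ℝ, 0 < x → ∀ τ : ℝ,
      ContDiffAt ℝ 1 (fun p : ℝ × ℝ => f p.1 p.2) (x, τ) :=
    fun x hx τ => hf.contDiffAt (hS.mem_nhds ⟨hx, trivial⟩)
  -- derivative in τ, identified with the full Fréchet derivative
  have hdτ : ∀ x : ℝ, 0 < x → ∀ τ : ℝ,
      HasDerivAt (fun τ' => f x τ')
        ((fderiv ℝ (fun p : ℝ × ℝ => f p.1 p.2) (x, τ)) (0, 1)) τ := by
    intro x hx τ
    have h1 := ((hCD x hx τ).differentiableAt one_ne_zero).hasFDerivAt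
    have h2 : HasDerivAt (fun τ' : ℝ => ((x, τ') : ℝ × ℝ)) ((0 : ℝ), (1 : ℝ)) τ :=
      HasDerivAt.prodMk (hasDerivAt_const τ x) (hasDerivAt_id τ)
    exact h1.comp_hasDerivAt τ h2
  have hdτ_eq : ∀ x : ℝ, 0 < x → ∀ τ : ℝ,
      deriv (fun τ' => f x τ') τ
        = (fderiv ℝ (fun p : ℝ × ℝ => f p.1 p.2) (x, τ)) (0, 1) :=
    fun x hx τ => (hdτ x hx τ).deriv
  have hdτ' : ∀ x : ℝ, 0 < x → ∀ τ : ℝ,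
      HasDerivAt (fun τ' => f x τ') (deriv (fun τ' => f x τ') τ) τ := by
    intro x hx τ
    rw [hdτ_eq x hx τ]; exact hdτ x hx τ
  -- continuity facts
  have hfc : ContinuousOn (fun p : ℝ × ℝ => f p.1 p.2) (Set.Ioi 0 ×ˢ Set.univ) :=
    hf.continuousOn
  have hslice : ∀ τ : ℝ, ContinuousOn (fun x => f x τ) (Set.Ioi (0:ℝ)) := by
    intro τ
    exact hfc.comp ((continuous_id.prodMk continuous_const).continuousOn)
      (fun x hx => ⟨hx, trivial⟩)
  have hmeasF : ∀ τ : ℝ, AEStronglyMeasurable (fun x => x * f x τ)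
      (volume.restrict (Set.Ioi 0)) := by
    intro τ
    exact ((continuous_id.continuousOn.mul (hslice τ))).aestronglyMeasurable
      measurableSet_Ioi
  have hfderivc : ContinuousOn (fderiv ℝ (fun p : ℝ × ℝ => f p.1 p.2))
      (Set.Ioi 0 ×ˢ Set.univ) := hf.continuousOn_fderiv_of_isOpen hS le_rfl
  have hF'cont : ∀ τ : ℝ,
      ContinuousOn (fun x => x * deriv (fun τ' => f x τ') τ) (Set.Ioi (0:ℝ)) := by
    intro τ
    have h2 : ContinuousOn
        (fun x : ℝ => fderiv ℝ (fun p : ℝ × ℝ => f p.1 p.2) (x, τ)) (Set.Ioi 0) :=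
      hfderivc.comp ((continuous_id.prodMk continuous_const).continuousOn)
        (fun x hx => ⟨hx, trivial⟩)
    have h1 : ContinuousOn
        (fun x : ℝ => (fderiv ℝ (fun p : ℝ × ℝ => f p.1 p.2) (x, τ)) (0, 1))
        (Set.Ioi 0) := h2.clm_apply continuousOn_const
    exact (continuous_id.continuousOn.mul h1).congr
      (fun x hx => by rw [hdτ_eq x hx τ]; rfl)
  -- differentiation under the integral sign
  obtain ⟨g, hg_int, ε, hε, hgbound⟩ := hdom τ₀
  have h_bound : ∀ᵐ x ∂(volume.restrict (Set.Ioi (0:ℝ))), ∀ τ ∈ Metric.ball τ₀ ε,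
      ‖x * deriv (fun τ' => f x τ') τ‖ ≤ g x := by
    filter_upwards [ae_restrict_mem measurableSet_Ioi] with x hx τ hτ
    have := hgbound τ (by simpa [Real.dist_eq] using hτ) x hx
    simpa only [Real.norm_eq_abs] using this
  have h_diff : ∀ᵐ x ∂(volume.restrict (Set.Ioi (0:ℝ))), ∀ τ ∈ Metric.ball τ₀ ε,
      HasDerivAt (fun τ' => x * f x τ') (x * deriv (fun τ' => f x τ') τ) τ := by
    filter_upwards [ae_restrict_mem measurableSet_Ioi] with x hx τ _
    exact (hdτ' x hx τ).const_mul x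
  obtain ⟨hF'int, hMderiv⟩ :=
    hasDerivAt_integral_of_dominated_loc_of_deriv_le (μ := volume.restrict (Set.Ioi 0))
      (F := fun τ x => x * f x τ)
      (F' := fun τ x => x * deriv (fun τ' => f x τ') τ) (bound := g) (Metric.ball_mem_nhds τ₀ hε)
      (Filter.Eventually.of_forall fun τ => hmeasF τ) (hint1 τ₀)
      ((hF'cont τ₀).aestronglyMeasurable measurableSet_Ioi) h_bound hg_int h_diff
  -- integration by parts via FTC on (0,∞)
  have hGx : ∀ x : ℝ, 0 < x → DifferentiableAt ℝ (fun x' => x' ^ α * f x' τ₀) x := by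
    intro x hx
    have h1 : DifferentiableAt ℝ (fun x' : ℝ => x' ^ α) x :=
      (Real.hasDerivAt_rpow_const (Or.inl hx.ne')).differentiableAt
    have h2 : DifferentiableAt ℝ (fun x' => f x' τ₀) x :=
      ((hCD x hx τ₀).differentiableAt one_ne_zero).comp (g := fun p : ℝ × ℝ => f p.1 p.2) x
        (DifferentiableAt.prodMk differentiableAt_id (differentiableAt_const τ₀) :
          DifferentiableAt ℝ (fun x' : ℝ => ((x', τ₀) : ℝ × ℝ)) x)
    exact h1.mul h2
  have hφ' : ∀ x ∈ Set.Ioi (0:ℝ), HasDerivAt (fun x' => x' * (x' ^ α * f x' τ₀))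
      (x ^ α * f x τ₀ - η * x ^ (r+1) * f x τ₀
        - x * deriv (fun τ' => f x τ') τ₀) x := by
    intro x hx
    have h := (hasDerivAt_id x).mul (hGx x hx).hasDerivAt
    have hkey : 1 * (x ^ α * f x τ₀) + id x * deriv (fun x' => x' ^ α * f x' τ₀) x
        = x ^ α * f x τ₀ - η * x ^ (r+1) * f x τ₀
          - x * deriv (fun τ' => f x τ') τ₀ := by
      have hp := hPDE x hx τ₀
      have hxr : x ^ (r + 1) = x ^ r * x := by
        rw [Real.rpow_add hx, Real.rpow_one]
      have hd : deriv (fun x' => x' ^ α * f x' τ₀) x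
          = -η * x ^ r * f x τ₀ - deriv (fun τ' => f x τ') τ₀ := by linarith
      simp only [id_eq, one_mul, hd, hxr]; ring
    rw [hkey] at h
    exact h
  have h3 : MeasureTheory.IntegrableOn (fun x : ℝ => η * x ^ (r+1) * f x τ₀)
      (Set.Ioi 0) := by
    have := (hint3 τ₀).const_mul η
    simp only [mul_assoc]
    exact this
  have hder_int : MeasureTheory.IntegrableOn
      (fun x : ℝ => x ^ α * f x τ₀ - η * x ^ (r+1) * f x τ₀
        - x * deriv (fun τ' => f x τ') τ₀) (Set.Ioi 0) :=
    ((hint2 τ₀).sub h3).sub hF'int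
  have hcont0 : ContinuousWithinAt (fun x : ℝ => x * (x ^ α * f x τ₀))
      (Set.Ici (0:ℝ)) 0 := by
    rw [ContinuousWithinAt, zero_mul, ← Set.Ioi_insert, nhdsWithin_insert,
      Filter.tendsto_sup]
    constructor
    · simpa using tendsto_pure_nhds (fun x : ℝ => x * (x ^ α * f x τ₀)) 0
    · have hid : Filter.Tendsto (fun x : ℝ => x) (nhdsWithin 0 (Set.Ioi 0))
          (nhds (0:ℝ)) := (continuous_id.tendsto 0).mono_left nhdsWithin_le_nhds
      simpa using hid.mul (hBC0 τ₀)
  have htop : Filter.Tendsto (fun x : ℝ => x * (x ^ α * f x τ₀))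
      Filter.atTop (nhds 0) := by
    refine (hBCinf τ₀).congr' ?_
    filter_upwards [Filter.eventually_gt_atTop (0:ℝ)] with x hx
    rw [Real.rpow_add hx, Real.rpow_one, mul_assoc]
  have hFTC : (∫ x in Set.Ioi (0:ℝ), (x ^ α * f x τ₀ - η * x ^ (r+1) * f x τ₀
      - x * deriv (fun τ' => f x τ') τ₀)) = 0 := by
    have := MeasureTheory.integral_Ioi_of_hasDerivAt_of_tendsto hcont0 hφ' hder_int htop
    simpa using this
  have hconst : (∫ x in Set.Ioi (0:ℝ), η * x ^ (r+1) * f x τ₀)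
      = η * ∫ x in Set.Ioi (0:ℝ), x ^ (r+1) * f x τ₀ := by
    simp_rw [mul_assoc]
    exact MeasureTheory.integral_const_mul η _
  have hA : MeasureTheory.IntegrableOn
      (fun x : ℝ => x ^ α * f x τ₀ - η * x ^ (r+1) * f x τ₀) (Set.Ioi 0) :=
    (hint2 τ₀).sub h3
  have hsplit : (∫ x in Set.Ioi (0:ℝ), (x ^ α * f x τ₀ - η * x ^ (r+1) * f x τ₀
      - x * deriv (fun τ' => f x τ') τ₀))
      = (∫ x in Set.Ioi (0:ℝ), x ^ α * f x τ₀)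
        - (∫ x in Set.Ioi (0:ℝ), η * x ^ (r+1) * f x τ₀)
        - ∫ x in Set.Ioi (0:ℝ), x * deriv (fun τ' => f x τ') τ₀ := by
    rw [MeasureTheory.integral_sub hA hF'int,
      MeasureTheory.integral_sub (hint2 τ₀) h3]
  have hI : (∫ x in Set.Ioi (0:ℝ), x * deriv (fun τ' => f x τ') τ₀)
      = (∫ x in Set.Ioi (0:ℝ), x ^ α * f x τ₀)
        - η * ∫ x in Set.Ioi (0:ℝ), x ^ (r+1) * f x τ₀ := by
    rw [hsplit, hconst] at hFTC
    linarith
  have hfinal := (hmono τ₀).add hMderiv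
  have heq : (1 - ∫ x in Set.Ioi (0:ℝ), x ^ α * f x τ₀)
      + (∫ x in Set.Ioi (0:ℝ), x * deriv (fun τ' => f x τ') τ₀)
      = 1 - η * ∫ x in Set.Ioi (0:ℝ), x ^ (r+1) * f x τ₀ := by
    rw [hI]; ring
  rw [heq] at hfinal
  exact hfinal
end

section
/- Fix α ∈ [0,1), γ ∈ (0,1), q > 0 and n̄₁ > 1, and let N_k = N_k(n̄₁) be the constant-flux steady state. Then the sequence k ↦ a_k N_k is nonincreasing in k. Consequently N_k ≤ n̄₁ for all k ≥ 1, and if α > 0 then N_k → 0 as k → ∞. -/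
open Filter

/-- Attachment rate `a_k = k^α`. -/
noncomputable def a (α : ℝ) (k : ℕ) : ℝ := (k : ℝ) ^ α

/-- Detachment rate `b_k = k^α (1 + q k^{−γ})`. -/
noncomputable def b (α γ q : ℝ) (k : ℕ) : ℝ := (k : ℝ) ^ α * (1 + q * (k : ℝ) ^ (-γ))

/-- Equilibrium coefficients `Q_1 = 1`, `Q_k = ∏_{l=1}^{k−1} a_l / b_{l+1}`. -/
noncomputable def Q (α γ q : ℝ) (k : ℕ) : ℝ :=
  ∏ l ∈ Finset.Icc 1 (k - 1), a α l / b α γ q (l + 1)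

/-- Summand `c_l = 1/(a_l Q_l n̄₁^{l+1})` (used for `l ≥ 1`). -/
noncomputable def c (α γ q n₁ : ℝ) (l : ℕ) : ℝ :=
  1 / (a α l * Q α γ q l * n₁ ^ (l + 1))

/-- Constant flux `J(n̄₁) = (∑_{l=1}^∞ 1/(a_l Q_l n̄₁^{l+1}))⁻¹`. -/
noncomputable def J (α γ q n₁ : ℝ) : ℝ := (∑' i : ℕ, c α γ q n₁ (1 + i))⁻¹

/-- Constant-flux steady state
`N_k(n̄₁) = J(n̄₁) Q_k n̄₁^k ∑_{l=k}^∞ 1/(a_l Q_l n̄₁^{l+1})`. -/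
noncomputable def N (α γ q n₁ : ℝ) (k : ℕ) : ℝ :=
  J α γ q n₁ * Q α γ q k * n₁ ^ k * ∑' i : ℕ, c α γ q n₁ (k + i)

/-- Tail sums `S_k = ∑_{l=k}^∞ c_l`. -/
noncomputable def Saux (α γ q n₁ : ℝ) (k : ℕ) : ℝ := ∑' i : ℕ, c α γ q n₁ (k + i)

section Aux

variable {α γ q n₁ : ℝ}

lemma a_pos {k : ℕ} (hk : 1 ≤ k) : 0 < a α k := by
  have : (0:ℝ) < (k:ℝ) := by exact_mod_cast hk
  exact Real.rpow_pos_of_pos this _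

lemma one_le_a (hα0 : 0 ≤ α) {k : ℕ} (hk : 1 ≤ k) : 1 ≤ a α k := by
  have : (1:ℝ) ≤ (k:ℝ) := by exact_mod_cast hk
  exact Real.one_le_rpow this hα0

lemma b_pos (hq : 0 < q) {k : ℕ} (hk : 1 ≤ k) : 0 < b α γ q k := by
  have hk' : (0:ℝ) < (k:ℝ) := by exact_mod_cast hk
  have h1 : (0:ℝ) < (k:ℝ) ^ α := Real.rpow_pos_of_pos hk' _
  have h2 : (0:ℝ) < (k:ℝ) ^ (-γ) := Real.rpow_pos_of_pos hk' _
  have : (0:ℝ) < 1 + q * (k:ℝ) ^ (-γ) := by positivity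
  exact mul_pos h1 this

lemma Q_pos (hq : 0 < q) (k : ℕ) : 0 < Q α γ q k := by
  unfold Q
  apply Finset.prod_pos
  intro l hl
  rw [Finset.mem_Icc] at hl
  exact div_pos (a_pos hl.1) (b_pos hq (by omega))

lemma c_pos (hq : 0 < q) (hn : 0 < n₁) {k : ℕ} (hk : 1 ≤ k) : 0 < c α γ q n₁ k := by
  unfold c
  exact div_pos one_pos
    (mul_pos (mul_pos (a_pos hk) (Q_pos hq k)) (pow_pos hn _))

lemma c_nonneg (hq : 0 < q) (hn : 0 < n₁) (k : ℕ) : 0 ≤ c α γ q n₁ k := by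
  unfold c
  have h1 : (0:ℝ) ≤ a α k := Real.rpow_nonneg (Nat.cast_nonneg k) _
  have h2 := Q_pos (α := α) (γ := γ) hq k
  exact div_nonneg zero_le_one (by positivity)

lemma Q_succ {k : ℕ} (hk : 1 ≤ k) :
    Q α γ q (k + 1) = Q α γ q k * (a α k / b α γ q (k + 1)) := by
  unfold Q
  have h : k + 1 - 1 = (k - 1) + 1 := by omega
  rw [h, Finset.prod_Icc_succ_top (by omega)]
  have h2 : k - 1 + 1 = k := by omega
  rw [h2]

lemma c_succ (hq : 0 < q) (hn : 0 < n₁) {k : ℕ} (hk : 1 ≤ k) :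
    c α γ q n₁ (k + 1) =
      c α γ q n₁ k * ((1 + q * ((k:ℝ) + 1) ^ (-γ)) / n₁) := by
  have hak : a α k ≠ 0 := (a_pos hk).ne'
  have hak1 : a α (k + 1) ≠ 0 := (a_pos (k := k + 1) (by omega)).ne'
  have hQk : Q α γ q k ≠ 0 := (Q_pos hq k).ne'
  have hb : b α γ q (k + 1) ≠ 0 := (b_pos hq (k := k + 1) (by omega)).ne'
  have hn' : n₁ ≠ 0 := hn.ne'
  have hcast : ((k + 1 : ℕ) : ℝ) = (k : ℝ) + 1 := by push_cast; ring
  have hbval : b α γ q (k + 1) = a α (k + 1) * (1 + q * ((k:ℝ) + 1) ^ (-γ)) := by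
    unfold a b; rw [hcast]
  unfold c
  rw [Q_succ hk]
  field_simp
  rw [hbval]
  ring

lemma summable_c (hq : 0 < q) (hγ0 : 0 < γ) (hn₁ : 1 < n₁) :
    Summable (c α γ q n₁) := by
  have hn : (0:ℝ) < n₁ := lt_trans one_pos hn₁
  set r : ℝ := (n₁ + 1) / (2 * n₁) with hr
  have hr1 : r < 1 := by rw [hr, div_lt_one (by linarith)]; linarith
  have htend : Tendsto (fun l : ℕ => q * (l:ℝ) ^ (-γ)) atTop (nhds 0) := by
    have h1 : Tendsto (fun x : ℝ => x ^ (-γ)) atTop (nhds 0) := tendsto_rpow_neg_atTop hγ0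
    have h2 := (h1.comp tendsto_natCast_atTop_atTop).const_mul q
    simpa using h2
  have hev : ∀ᶠ l : ℕ in atTop, q * (l:ℝ) ^ (-γ) < (n₁ - 1) / 2 :=
    htend.eventually_lt_const (by linarith)
  obtain ⟨L, hL⟩ := eventually_atTop.1 hev
  apply summable_of_ratio_norm_eventually_le hr1
  rw [eventually_atTop]
  refine ⟨max L 1, fun l hl => ?_⟩
  have hl1 : 1 ≤ l := le_trans (le_max_right L 1) hl
  have hlL : L ≤ l + 1 := by have := le_trans (le_max_left L 1) hl; omega
  have hρ : (1 + q * ((l:ℝ) + 1) ^ (-γ)) / n₁ ≤ r := by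
    have h := hL (l + 1) hlL
    push_cast at h
    rw [hr, div_le_div_iff₀ hn (by linarith)]
    nlinarith [mul_lt_mul_of_pos_right h (show (0:ℝ) < 2 * n₁ by linarith)]
  have hcl : 0 < c α γ q n₁ l := c_pos hq hn hl1
  have hcl1 : 0 < c α γ q n₁ (l + 1) := c_pos hq hn (k := l + 1) (by omega)
  rw [Real.norm_eq_abs, Real.norm_eq_abs, abs_of_pos hcl1, abs_of_pos hcl,
    c_succ hq hn hl1]
  rw [mul_comm r]
  exact mul_le_mul_of_nonneg_left hρ hcl.le

lemma summable_shift (hq : 0 < q) (hγ0 : 0 < γ) (hn₁ : 1 < n₁) (k : ℕ) :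
    Summable (fun i : ℕ => c α γ q n₁ (k + i)) := by
  have h := (summable_nat_add_iff k).2 (summable_c (α := α) hq hγ0 hn₁)
  exact h.congr fun i => by rw [add_comm]

lemma rpow_neg_anti (hγ0 : 0 < γ) {x y : ℝ} (hx : 0 < x) (hxy : x ≤ y) :
    y ^ (-γ) ≤ x ^ (-γ) := by
  have hy : 0 < y := lt_of_lt_of_le hx hxy
  rw [Real.rpow_neg hy.le, Real.rpow_neg hx.le]
  gcongr

lemma cross (hq : 0 < q) (hγ0 : 0 < γ) (hn₁ : 1 < n₁) {k : ℕ} (hk : 1 ≤ k) (i : ℕ) :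
    c α γ q n₁ (k + 1 + i) * c α γ q n₁ k ≤ c α γ q n₁ (k + i) * c α γ q n₁ (k + 1) := by
  have hn : (0:ℝ) < n₁ := lt_trans one_pos hn₁
  induction i with
  | zero => simp [mul_comm]
  | succ i ih =>
    have e1 : k + 1 + (i + 1) = (k + 1 + i) + 1 := by omega
    have e2 : k + (i + 1) = (k + i) + 1 := by omega
    rw [e1, e2, c_succ hq hn (show 1 ≤ k + 1 + i by omega),
      c_succ hq hn (show 1 ≤ k + i by omega)]
    set ρ₂ := (1 + q * ((↑(k + 1 + i):ℝ) + 1) ^ (-γ)) / n₁ with hρ₂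
    set ρ₁ := (1 + q * ((↑(k + i):ℝ) + 1) ^ (-γ)) / n₁ with hρ₁
    have hx : (0:ℝ) < (↑(k + i):ℝ) + 1 := by positivity
    have hxy : (↑(k + i):ℝ) + 1 ≤ (↑(k + 1 + i):ℝ) + 1 := by push_cast; linarith
    have hrp := rpow_neg_anti (x := (↑(k + i):ℝ) + 1) (y := (↑(k + 1 + i):ℝ) + 1) hγ0 hx hxy
    have hρ21 : ρ₂ ≤ ρ₁ := by
      rw [hρ₂, hρ₁]
      gcongr
    have hρ1nn : 0 ≤ ρ₁ := by
      rw [hρ₁]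
      have : (0:ℝ) ≤ ((↑(k + i):ℝ) + 1) ^ (-γ) := (Real.rpow_pos_of_pos hx _).le
      positivity
    have hc2 : 0 ≤ ρ₂ := by
      rw [hρ₂]
      have h2 : (0:ℝ) < (↑(k + 1 + i):ℝ) + 1 := by positivity
      have : (0:ℝ) ≤ ((↑(k + 1 + i):ℝ) + 1) ^ (-γ) := (Real.rpow_pos_of_pos h2 _).le
      positivity
    have hcknn := c_nonneg (α := α) (γ := γ) (q := q) (n₁ := n₁) hq hn k
    have hc1i : 0 ≤ c α γ q n₁ (k + 1 + i) * c α γ q n₁ k :=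
      mul_nonneg (c_nonneg hq hn _) hcknn
    calc c α γ q n₁ (k + 1 + i) * ρ₂ * c α γ q n₁ k
        = (c α γ q n₁ (k + 1 + i) * c α γ q n₁ k) * ρ₂ := by ring
      _ ≤ (c α γ q n₁ (k + 1 + i) * c α γ q n₁ k) * ρ₁ :=
          mul_le_mul_of_nonneg_left hρ21 hc1i
      _ ≤ (c α γ q n₁ (k + i) * c α γ q n₁ (k + 1)) * ρ₁ :=
          mul_le_mul_of_nonneg_right ih hρ1nn
      _ = c α γ q n₁ (k + i) * ρ₁ * c α γ q n₁ (k + 1) := by ring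

end Aux

/-- The constant-flux steady state satisfies: `k ↦ a_k N_k` is nonincreasing;
hence `N_k ≤ n̄₁` for all `k ≥ 1`, and `N_k → 0` as `k → ∞` when `α > 0`. -/
theorem stmt17 (α γ q n₁ : ℝ) (hα0 : 0 ≤ α) (hα1 : α < 1)
    (hγ0 : 0 < γ) (hγ1 : γ < 1) (hq : 0 < q) (hn₁ : 1 < n₁) :
    (∀ k : ℕ, 1 ≤ k →
        a α (k + 1) * N α γ q n₁ (k + 1) ≤ a α k * N α γ q n₁ k) ∧
      (∀ k : ℕ, 1 ≤ k → N α γ q n₁ k ≤ n₁) ∧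
      (0 < α → Filter.Tendsto (N α γ q n₁) Filter.atTop (nhds 0)) := by
  have hn : (0:ℝ) < n₁ := lt_trans one_pos hn₁
  have hsum : ∀ k : ℕ, Summable (fun i : ℕ => c α γ q n₁ (k + i)) :=
    summable_shift hq hγ0 hn₁
  have hSpos : ∀ k : ℕ, 1 ≤ k → 0 < Saux α γ q n₁ k := by
    intro k hk
    exact Summable.tsum_pos (hsum k) (fun i => c_nonneg hq hn _) 0
      (by simpa using c_pos hq hn hk)
  have hJ : J α γ q n₁ = (Saux α γ q n₁ 1)⁻¹ := rfl
  have hJpos : 0 < J α γ q n₁ := by rw [hJ]; exact inv_pos.2 (hSpos 1 le_rfl)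
  have hNS : ∀ k : ℕ, N α γ q n₁ k
      = J α γ q n₁ * Q α γ q k * n₁ ^ k * Saux α γ q n₁ k := fun k => rfl
  -- key identity
  have key : ∀ k : ℕ, 1 ≤ k →
      a α k * Q α γ q k * (n₁ ^ k * n₁) * c α γ q n₁ k = 1 := by
    intro k hk
    have hD : a α k * Q α γ q k * n₁ ^ (k + 1) ≠ 0 :=
      (mul_pos (mul_pos (a_pos hk) (Q_pos hq k)) (pow_pos hn _)).ne'
    rw [← pow_succ]
    unfold c
    rw [mul_one_div, div_self hD]
  -- N in terms of S and c
  have hNval : ∀ k : ℕ, 1 ≤ k → a α k * N α γ q n₁ k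
      = J α γ q n₁ * (Saux α γ q n₁ k / (c α γ q n₁ k * n₁)) := by
    intro k hk
    have hkey := key k hk
    have hck : c α γ q n₁ k ≠ 0 := (c_pos hq hn hk).ne'
    rw [hNS k]
    field_simp
    ring_nf
    ring_nf at hkey
    linear_combination (Saux α γ q n₁ k) * hkey
  -- monotone step
  have hmono : ∀ k : ℕ, 1 ≤ k →
      a α (k + 1) * N α γ q n₁ (k + 1) ≤ a α k * N α γ q n₁ k := by
    intro k hk
    rw [hNval k hk, hNval (k + 1) (by omega)]
    have hck : 0 < c α γ q n₁ k := c_pos hq hn hk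
    have hck1 : 0 < c α γ q n₁ (k + 1) := c_pos hq hn (k := k + 1) (by omega)
    apply mul_le_mul_of_nonneg_left _ hJpos.le
    rw [div_le_div_iff₀ (by positivity) (by positivity)]
    have hkey : Saux α γ q n₁ (k + 1) * c α γ q n₁ k
        ≤ Saux α γ q n₁ k * c α γ q n₁ (k + 1) := by
      unfold Saux
      rw [← tsum_mul_right, ← tsum_mul_right]
      exact Summable.tsum_le_tsum (fun i => cross hq hγ0 hn₁ hk i)
        ((hsum (k + 1)).mul_right _) ((hsum k).mul_right _)
    nlinarith [mul_le_mul_of_nonneg_right hkey hn.le]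
  -- N 1 = n₁
  have hQ1 : Q α γ q 1 = 1 := by unfold Q; simp
  have hN1 : N α γ q n₁ 1 = n₁ := by
    rw [hNS 1, hQ1, hJ, pow_one, mul_one, inv_mul_eq_div, div_mul_eq_mul_div,
      mul_div_assoc, div_self (hSpos 1 le_rfl).ne', mul_one]
  -- chain : a_k N_k ≤ n₁
  have chain : ∀ k : ℕ, 1 ≤ k → a α k * N α γ q n₁ k ≤ n₁ := by
    intro k hk
    induction k, hk using Nat.le_induction with
    | base =>
      have ha1 : a α 1 = 1 := by unfold a; simp
      rw [ha1, hN1, one_mul]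
    | succ k hk ih => exact le_trans (hmono k hk) ih
  have hNnonneg : ∀ k : ℕ, 0 ≤ N α γ q n₁ k := by
    intro k
    rw [hNS k]
    exact mul_nonneg (mul_nonneg (mul_nonneg hJpos.le (Q_pos hq k).le)
      (pow_nonneg hn.le k)) (tsum_nonneg fun i => c_nonneg hq hn _)
  refine ⟨hmono, ?_, ?_⟩
  · intro k hk
    calc N α γ q n₁ k ≤ a α k * N α γ q n₁ k :=
          le_mul_of_one_le_left (hNnonneg k) (one_le_a hα0 hk)
      _ ≤ n₁ := chain k hk
  · intro hα
    apply squeeze_zero' (g := fun k : ℕ => n₁ * (k:ℝ) ^ (-α)) (Eventually.of_forall hNnonneg) ?_ ?_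
    · rw [eventually_atTop]
      refine ⟨1, fun k hk => ?_⟩
      have ha := a_pos (α := α) hk
      have hb : N α γ q n₁ k ≤ n₁ / a α k := by
        rw [le_div_iff₀ ha, mul_comm]
        exact chain k hk
      calc N α γ q n₁ k ≤ n₁ / a α k := hb
        _ = n₁ * (k:ℝ) ^ (-α) := by
            unfold a
            rw [Real.rpow_neg (Nat.cast_nonneg k), div_eq_mul_inv]
    · have h1 : Tendsto (fun x : ℝ => x ^ (-α)) atTop (nhds 0) := tendsto_rpow_neg_atTop hα
      have h2 := (h1.comp tendsto_natCast_atTop_atTop).const_mul n₁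
      simpa using h2
end
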